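/- arXiv:1309.0888 — 5 statements merged into one kernel-verified Lean document; each statement's English description precedes it below -/
import Mathlib

section
/- For every integer k ≥ 2 and every positive integer s, there exists a graph G such that χ_l(G^k) − χ(G^k) ≥ 3^{3sk−3} − 1; in particular, for any fixed k ≥ 2 the gap χ_l(G^k) − χ(G^k) over all graphs G is unbounded. -/
open SimpleGraph

/-- The `k`th power of a graph `G`: two distinct vertices are adjacent iff their
distance in `G` is (finite and) at most `k`. -/
def SimpleGraph.power {V : Type*} (G : SimpleGraph V) (k : ℕ) : SimpleGraph V where
  Adj u v := u ≠ v ∧ G.Reachable u v ∧ G.dist u v ≤ k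
  symm := by
    constructor
    rintro u v ⟨h1, h2, h3⟩
    exact ⟨h1.symm, h2.symm, by rwa [SimpleGraph.dist_comm]⟩
  loopless := by
    constructor
    rintro v ⟨h1, -, -⟩
    exact h1 rfl

/-- `G` admits a proper coloring from the lists `L`. -/
def SimpleGraph.Choosable {V : Type*} (G : SimpleGraph V) (L : V → Finset ℕ) : Prop :=
  ∃ φ : V → ℕ, (∀ v, φ v ∈ L v) ∧ ∀ u v, G.Adj u v → φ u ≠ φ v

/-- The list chromatic number of `G`: the least `t` such that `G` is colorable from
any assignment of lists of size at least `t`. -/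
noncomputable def SimpleGraph.listChromaticNumber {V : Type*} (G : SimpleGraph V) : ℕ :=
  sInf {t : ℕ | ∀ L : V → Finset ℕ, (∀ v, t ≤ (L v).card) → G.Choosable L}

/-- The lexicographic product of two graphs. -/
def SimpleGraph.lexProd {V W : Type*} (G : SimpleGraph V) (H : SimpleGraph W) :
    SimpleGraph (V × W) where
  Adj a b := G.Adj a.1 b.1 ∨ (a.1 = b.1 ∧ H.Adj a.2 b.2)
  symm := by
    constructor
    rintro a b (h | ⟨h1, h2⟩)
    · exact Or.inl h.symm
    · exact Or.inr ⟨h1.symm, h2.symm⟩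
  loopless := by
    constructor
    rintro a (h | ⟨-, h2⟩)
    · exact G.irrefl h
    · exact H.irrefl h2

/-- Vertex set `Γ_m`: the vectors in `ℤ_3^m` whose coordinates sum to zero. -/
def GammaVert (m : ℕ) : Type := {z : Fin m → ZMod 3 // ∑ i, z i = 0}

/-- The generator `x_{i,j}`: `1` in coordinate `i`, `2` in coordinate `j`, `0` elsewhere. -/
def xvec (m : ℕ) (i j : Fin m) : Fin m → ZMod 3 :=
  fun l => if l = i then 1 else if l = j then 2 else 0

/-- The Cayley graph `G_m` on `Γ_m` with connection set `X_m = {x_{i,j} : i ≠ j}`. -/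
def Gm (m : ℕ) : SimpleGraph (GammaVert m) where
  Adj y z := ∃ i j : Fin m, i ≠ j ∧ y.1 - z.1 = xvec m i j
  symm := by
    constructor
    rintro y z ⟨i, j, hij, h⟩
    refine ⟨j, i, hij.symm, ?_⟩
    have h' : z.1 - y.1 = -(y.1 - z.1) := by ring
    rw [h', h]
    funext l
    simp only [xvec, Pi.neg_apply]
    by_cases h1 : l = i
    · subst h1
      simp only [if_pos rfl, if_neg hij]
      decide
    · by_cases h2 : l = j
      · subst h2
        simp only [if_pos rfl, if_neg h1]
        decide
      · simp only [if_neg h1, if_neg h2]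
        decide
  loopless := by
    constructor
    rintro y ⟨i, j, hij, h⟩
    have := congrFun h i
    simp [xvec] at this

namespace PowerGap

abbrev Z3 := ZMod 3

/-- Pair functionals `x ↦ α x_i + (1-α) x_j` with `i ≠ j`; they all send the
all-ones vector to `1`. -/
def PhiT (m : ℕ) := {q : (Fin m × Fin m) × Z3 // q.1.1 ≠ q.1.2}

instance (m : ℕ) : Fintype (PhiT m) := by unfold PhiT; infer_instance
instance (m : ℕ) : DecidableEq (PhiT m) := by unfold PhiT; infer_instance

def phiF {m : ℕ} (p : PhiT m) (x : Fin m → Z3) : Z3 :=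
  p.1.2 * x p.1.1.1 + (1 - p.1.2) * x p.1.1.2

lemma phiF_sub {m : ℕ} (p : PhiT m) (x z : Fin m → Z3) :
    phiF p (fun i => x i - z i) = phiF p x - phiF p z := by
  simp only [phiF]; ring

lemma phiF_const {m : ℕ} (p : PhiT m) (c : Z3) :
    phiF p (fun _ => c) = c := by
  simp only [phiF]; ring

lemma exists_phi {m : ℕ} (v : Fin m → Z3) (h : ∃ i j, v i ≠ v j) :
    ∃ p : PhiT m, phiF p v = 0 := by
  obtain ⟨i, j, hij⟩ := h
  have hne : i ≠ j := fun he => hij (by rw [he])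
  refine ⟨⟨((i, j), -(v j) * (v i - v j)), hne⟩, ?_⟩
  have h1 : (v i - v j) * (v i - v j) = 1 := by
    have hd : v i - v j ≠ 0 := sub_ne_zero.mpr hij
    revert hd; generalize v i - v j = δ; revert δ; decide
  simp only [phiF]
  linear_combination (-(v j)) * h1

/-- Chain (internal path) nodes of the gadgets. -/
abbrev ChainT (n τ : ℕ) := PhiT (n+2) × Z3 × Z3 × Fin τ
/-- Root nodes of the gadgets. -/
abbrev RootT (n : ℕ) := PhiT (n+2) × Z3
abbrev NodeT (n τ : ℕ) := ChainT n τ ⊕ RootT n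
/-- The vertex type: cube vertices plus gadget nodes. -/
abbrev Vtx (n τ : ℕ) := (Fin (n+2) → Z3) ⊕ NodeT n τ

instance (n τ : ℕ) : Fintype (ChainT n τ) := by unfold ChainT; infer_instance
instance (n : ℕ) : Fintype (RootT n) := by unfold RootT; infer_instance
instance (n τ : ℕ) : Fintype (NodeT n τ) := by unfold NodeT; infer_instance
instance (n τ : ℕ) : Fintype (Vtx n τ) := by unfold Vtx; infer_instance
instance (n τ : ℕ) : DecidableEq (Vtx n τ) := by unfold Vtx NodeT ChainT RootT; infer_instance

/-- Directed edge relation. -/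
def R (n τ : ℕ) : Vtx n τ → Vtx n τ → Prop
  | Sum.inl y, Sum.inr (Sum.inl (p, c, d, i)) =>
      i.val = 0 ∧ phiF p y = c ∧ y 0 = d
  | Sum.inl y, Sum.inr (Sum.inr (p, c)) => τ = 0 ∧ phiF p y = c
  | Sum.inr (Sum.inl (p, c, d, i)), Sum.inr (Sum.inl (p', c', d', i')) =>
      p = p' ∧ c = c' ∧ d = d' ∧ i'.val = i.val + 1
  | Sum.inr (Sum.inl (p, c, d, i)), Sum.inr (Sum.inr (p', c')) =>
      p = p' ∧ c = c' ∧ i.val + 1 = τ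
  | _, _ => False

/-- The graph `G` whose `k`-th power we study. -/
abbrev GG (n τ : ℕ) : SimpleGraph (Vtx n τ) where
  Adj u v := R n τ u v ∨ R n τ v u
  symm := by constructor; intro u v h; exact h.symm
  loopless := by
    constructor
    intro u h
    rcases u with y | (⟨p, c, d, i⟩ | ⟨p, c⟩) <;> simp only [R] at h <;>
      first
        | tauto
        | (rcases h with ⟨-, -, -, hi⟩ | ⟨-, -, -, hi⟩ <;> omega)


section Invariant

variable {n τ k : ℕ}

/-- State predicate for cube endpoints of walks from `y`. -/
def KS (τ : ℕ) (y z : Fin (n+2) → Z3) (L : ℕ) : Prop :=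
  (z 0 - y 0 = 0 ∧ (z = y ∨ 2 ≤ L)) ∨
    (∃ p : PhiT (n+2), phiF p (fun i => z i - y i) = 0 ∧ 2 * (τ + 1) ≤ L)

/-- Full state predicate for walks from `y`. -/
def st (τ : ℕ) (y : Fin (n+2) → Z3) : Vtx n τ → ℕ → Prop
  | Sum.inl z, L => KS τ y z L
  | Sum.inr (Sum.inl (p, c, d, i)), L =>
      (∃ w, phiF p w = c ∧ w 0 = d ∧ ∃ Le, KS τ y w Le ∧ Le + (i.val + 1) ≤ L) ∨
      (∃ w, phiF p w = c ∧ ∃ Le, KS τ y w Le ∧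
        Le + (τ + 1) + ((τ + 1) - (i.val + 1)) ≤ L)
  | Sum.inr (Sum.inr (p, c)), L =>
      ∃ w, phiF p w = c ∧ ∃ Le, KS τ y w Le ∧ Le + (τ + 1) ≤ L

lemma phiF_diff_zero {m : ℕ} (p : PhiT m) {w z : Fin m → Z3} {c : Z3}
    (hw : phiF p w = c) (hz : phiF p z = c) :
    phiF p (fun i => z i - w i) = 0 := by
  rw [phiF_sub, hw, hz, sub_self]

lemma st_step (hk : 2 * (τ + 1) ≤ k) (hk2 : k ≤ 2 * (τ + 1) + 1)
    {y : Fin (n+2) → Z3} {u v : Vtx n τ} {L : ℕ}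
    (h : (GG n τ).Adj u v) (hs : st τ y u L) (hL : L + 1 ≤ k) :
    st τ y v (L + 1) := by
  rcases u with z | (⟨p, c, d, i⟩ | ⟨p, c⟩) <;>
    rcases v with z' | (⟨p', c', d', i'⟩ | ⟨p', c'⟩)
  -- inl-inl : impossible
  · rcases h with h | h <;> simp only [R] at h
  -- inl z → chain
  · have hR : i'.val = 0 ∧ phiF p' z = c' ∧ z 0 = d' := by
      rcases h with h | h <;> simp only [R] at h; exact h
    obtain ⟨hi0, hφ, hd⟩ := hR
    exact Or.inl ⟨z, hφ, hd, L, hs, by omega⟩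
  -- inl z → root
  · have hR : τ = 0 ∧ phiF p' z = c' := by
      rcases h with h | h <;> simp only [R] at h; exact h
    exact ⟨z, hR.2, L, hs, by omega⟩
  -- chain → inl z'
  · have hR : i.val = 0 ∧ phiF p z' = c ∧ z' 0 = d := by
      rcases h with h | h <;> simp only [R] at h; exact h
    obtain ⟨hi0, hφz, hdz⟩ := hR
    rcases hs with ⟨w, hφw, hdw, Le, hKS, hlen⟩ | ⟨w, hφw, Le, hKS, hlen⟩
    · -- NS1 exit
      rcases hKS with ⟨h0, _⟩ | ⟨q, hq, h2t⟩
      · refine Or.inl ⟨?_, Or.inr (by omega)⟩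
        have : z' 0 = w 0 := by rw [hdz, hdw]
        rw [show z' 0 - y 0 = (z' 0 - w 0) + (w 0 - y 0) by ring, this, h0]
        ring
      · omega
    · -- NS3 exit (passed through root)
      rw [hi0] at hlen
      rcases hKS with ⟨h0, hwy⟩ | ⟨q, hq, h2t⟩
      · rcases hwy with rfl | h2
        · exact Or.inr ⟨p, phiF_diff_zero p hφw hφz, by omega⟩
        · omega
      · omega
  -- chain ↔ chain
  · have hR : (p = p' ∧ c = c' ∧ d = d' ∧ i'.val = i.val + 1) ∨
        (p' = p ∧ c' = c ∧ d' = d ∧ i.val = i'.val + 1) := by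
      rcases h with h | h <;> simp only [R] at h
      · exact Or.inl h
      · exact Or.inr h
    rcases hR with ⟨rfl, rfl, rfl, hii⟩ | ⟨rfl, rfl, rfl, hii⟩ <;>
      [skip; skip] <;>
      rcases hs with ⟨w, hφw, hdw, Le, hKS, hlen⟩ | ⟨w, hφw, Le, hKS, hlen⟩
    · exact Or.inl ⟨w, hφw, hdw, Le, hKS, by omega⟩
    · exact Or.inr ⟨w, hφw, Le, hKS, by omega⟩
    · exact Or.inl ⟨w, hφw, hdw, Le, hKS, by omega⟩
    · refine Or.inr ⟨w, hφw, Le, hKS, ?_⟩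
      have h1 : i.val < τ := i.isLt
      have h2 : i'.val < τ := i'.isLt
      omega
  -- chain → root
  · have hR : p = p' ∧ c = c' ∧ i.val + 1 = τ := by
      rcases h with h | h <;> simp only [R] at h; exact h
    obtain ⟨rfl, rfl, hiτ⟩ := hR
    rcases hs with ⟨w, hφw, hdw, Le, hKS, hlen⟩ | ⟨w, hφw, Le, hKS, hlen⟩
    · exact ⟨w, hφw, Le, hKS, by omega⟩
    · exact ⟨w, hφw, Le, hKS, by omega⟩
  -- root → inl z' (only when τ = 0)
  · have hR : τ = 0 ∧ phiF p z' = c := by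
      rcases h with h | h <;> simp only [R] at h; exact h
    obtain ⟨hτ0, hφz⟩ := hR
    obtain ⟨w, hφw, Le, hKS, hlen⟩ := hs
    rcases hKS with ⟨h0, hwy⟩ | ⟨q, hq, h2t⟩
    · rcases hwy with rfl | h2
      · exact Or.inr ⟨p, phiF_diff_zero p hφw hφz, by omega⟩
      · omega
    · omega
  -- root → chain
  · have hR : p' = p ∧ c' = c ∧ i'.val + 1 = τ := by
      rcases h with h | h <;> simp only [R] at h; exact h
    obtain ⟨rfl, rfl, hiτ⟩ := hR
    obtain ⟨w, hφw, Le, hKS, hlen⟩ := hs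
    exact Or.inr ⟨w, hφw, Le, hKS, by omega⟩
  -- root ↔ root: impossible
  · rcases h with h | h <;> simp only [R] at h

lemma st_walk_aux (hk : 2 * (τ + 1) ≤ k) (hk2 : k ≤ 2 * (τ + 1) + 1)
    {y : Fin (n+2) → Z3} :
    ∀ {v a : Vtx n τ} (w : (GG n τ).Walk v a), a = Sum.inl y →
      w.length ≤ k → st τ y v w.length := by
  intro v a w
  induction w with
  | nil =>
    rintro rfl _
    exact Or.inl ⟨by ring, Or.inl rfl⟩
  | cons h rest ih =>
    rintro rfl hlen
    rw [SimpleGraph.Walk.length_cons] at hlen ⊢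
    exact st_step hk hk2 (h.symm) (ih rfl (by omega)) hlen

lemma st_walk (hk : 2 * (τ + 1) ≤ k) (hk2 : k ≤ 2 * (τ + 1) + 1)
    {y : Fin (n+2) → Z3} {v : Vtx n τ} (w : (GG n τ).Walk v (Sum.inl y))
    (hw : w.length ≤ k) : st τ y v w.length :=
  st_walk_aux hk hk2 w rfl hw

/-- Same-triple cube vertices are NOT adjacent in the `k`-th power. -/
lemma not_adj_same_triple (hk : 2 * (τ + 1) ≤ k) (hk2 : k ≤ 2 * (τ + 1) + 1)
    {y : Fin (n+2) → Z3} {c : Z3} (hc : c ≠ 0) :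
    ¬ ((GG n τ).power k).Adj (Sum.inl y) (Sum.inl (fun i => y i + c)) := by
  rintro ⟨hne, hreach, hdist⟩
  obtain ⟨w, hwl⟩ := hreach.symm.exists_walk_length_eq_dist
  have hlen : w.length ≤ k := by
    rw [hwl, SimpleGraph.dist_comm]; exact hdist
  have hst := st_walk hk hk2 w hlen
  rcases hst with ⟨h0, _⟩ | ⟨p, hp, _⟩
  · simp at h0; exact hc h0
  · have : phiF p (fun i => (y i + c) - y i) = c := by
      have : (fun i => (y i + c) - y i) = (fun _ : Fin (n+2) => c) := by
        funext i; ring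
      rw [this, phiF_const]
    rw [hp] at this
    exact hc this.symm

end Invariant

section Upper

variable {n τ k : ℕ}

lemma climb (p : PhiT (n+2)) (c d : Z3) :
    ∀ (g : ℕ) (i : Fin τ), τ - 1 - i.val = g →
      ∃ w : (GG n τ).Walk (Sum.inr (Sum.inl (p, c, d, i))) (Sum.inr (Sum.inr (p, c))),
        w.length = τ - i.val := by
  intro g
  induction g with
  | zero =>
    intro i hi
    have hiτ : i.val + 1 = τ := by have := i.isLt; omega
    refine ⟨SimpleGraph.Walk.cons (Or.inl ?_ : (GG n τ).Adj _ _) SimpleGraph.Walk.nil, ?_⟩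
    · exact ⟨rfl, rfl, hiτ⟩
    · simp only [SimpleGraph.Walk.length_cons, SimpleGraph.Walk.length_nil]; omega
  | succ g ih =>
    intro i hi
    have hlt : i.val + 1 < τ := by have := i.isLt; omega
    obtain ⟨w, hw⟩ := ih ⟨i.val + 1, hlt⟩ (by simp only []; omega)
    refine ⟨SimpleGraph.Walk.cons (Or.inl ?_ : (GG n τ).Adj _ _) w, ?_⟩
    · exact ⟨rfl, rfl, rfl, rfl⟩
    · simp only [SimpleGraph.Walk.length_cons, hw]; omega

lemma walk_to_root (hτ : 0 < τ) (p : PhiT (n+2)) (y : Fin (n+2) → Z3)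
    (c : Z3) (hc : phiF p y = c) :
    ∃ w : (GG n τ).Walk (Sum.inl y) (Sum.inr (Sum.inr (p, c))),
      w.length = τ + 1 := by
  obtain ⟨w, hw⟩ := climb (n := n) p c (y 0) (τ - 1) ⟨0, hτ⟩ rfl
  refine ⟨SimpleGraph.Walk.cons (Or.inl ?_ : (GG n τ).Adj _ _) w, ?_⟩
  · exact ⟨rfl, hc, rfl⟩
  · have h0 : ((⟨0, hτ⟩ : Fin τ) : ℕ) = 0 := rfl
    rw [SimpleGraph.Walk.length_cons, hw, h0]; omega

/-- Cube vertices with non-constant difference ARE adjacent in the `k`-th power. -/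
lemma adj_cross (hk : 2 * (τ + 1) ≤ k) {y z : Fin (n+2) → Z3}
    (hne : ∃ i j, (z i - y i) ≠ (z j - y j)) :
    ((GG n τ).power k).Adj (Sum.inl y) (Sum.inl z) := by
  obtain ⟨p, hp⟩ := exists_phi (fun i => z i - y i) hne
  have hφzy : phiF p z = phiF p y := by
    rw [phiF_sub] at hp; exact sub_eq_zero.mp hp
  have hyz : y ≠ z := by
    rintro rfl
    obtain ⟨i, j, hij⟩ := hne
    simp at hij
  have hneq : (Sum.inl y : Vtx n τ) ≠ Sum.inl z := by
    simp only [ne_eq, Sum.inl.injEq]; exact hyz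
  by_cases hτ : 0 < τ
  · obtain ⟨w1, h1⟩ := walk_to_root hτ p y (phiF p y) rfl
    obtain ⟨w2, h2⟩ := walk_to_root hτ p z (phiF p y) hφzy
    let w := w1.append w2.reverse
    refine ⟨hneq, w.reachable, le_trans (SimpleGraph.dist_le w) ?_⟩
    have : w.length = (τ + 1) + (τ + 1) := by
      simp only [w, SimpleGraph.Walk.length_append, SimpleGraph.Walk.length_reverse,
        h1, h2]
    omega
  · have hτ0 : τ = 0 := by omega
    have e1 : (GG n τ).Adj (Sum.inl y) (Sum.inr (Sum.inr (p, phiF p y))) :=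
      Or.inl ⟨hτ0, rfl⟩
    have e2 : (GG n τ).Adj (Sum.inr (Sum.inr (p, phiF p y)) : Vtx n τ) (Sum.inl z) :=
      Or.inr ⟨hτ0, hφzy⟩
    let w : (GG n τ).Walk (Sum.inl y) (Sum.inl z) :=
      SimpleGraph.Walk.cons e1 (SimpleGraph.Walk.cons e2 SimpleGraph.Walk.nil)
    refine ⟨hneq, w.reachable, le_trans (SimpleGraph.dist_le w) ?_⟩
    simp only [w, SimpleGraph.Walk.length_cons, SimpleGraph.Walk.length_nil]
    omega

/-- Colors: representatives of triples, plus one fresh color per node. -/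
abbrev ColorRep (n : ℕ) := {x : Fin (n+2) → Z3 // x 0 = 0}
instance (n : ℕ) : Fintype (ColorRep n) := by unfold ColorRep; infer_instance
abbrev ColorT (n τ : ℕ) := ColorRep n ⊕ NodeT n τ
instance (n τ : ℕ) : Fintype (ColorT n τ) := by unfold ColorT; infer_instance

def col (n τ : ℕ) : Vtx n τ → ColorT n τ
  | Sum.inl y => Sum.inl ⟨fun i => y i - y 0, by simp⟩
  | Sum.inr ν => Sum.inr ν

lemma col_inl (n τ : ℕ) (y : Fin (n+2) → Z3) :
    col n τ (Sum.inl y) = Sum.inl ⟨fun i => y i - y 0, by simp⟩ := rfl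
lemma col_inr (n τ : ℕ) (ν : NodeT n τ) : col n τ (Sum.inr ν) = Sum.inr ν := rfl

lemma col_valid (hk : 2 * (τ + 1) ≤ k) (hk2 : k ≤ 2 * (τ + 1) + 1)
    {u v : Vtx n τ} (hadj : ((GG n τ).power k).Adj u v) :
    col n τ u ≠ col n τ v := by
  intro heq
  rcases u with y | ν <;> rcases v with z | ν'
  · rw [col_inl, col_inl, Sum.inl.injEq, Subtype.mk.injEq] at heq
    have hz : z = fun i => y i + (z 0 - y 0) := by
      funext i
      have h := congrFun heq i
      linear_combination -h
    by_cases hc : (z 0 - y 0) = 0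
    · apply hadj.1
      have : z = y := by rw [hz]; funext i; rw [hc]; ring
      rw [this]
    · rw [hz] at hadj
      exact not_adj_same_triple hk hk2 hc hadj
  · rw [col_inl, col_inr] at heq; exact absurd heq (by simp)
  · rw [col_inr, col_inl] at heq; exact absurd heq (by simp)
  · rw [col_inr, col_inr, Sum.inr.injEq] at heq
    rw [heq] at hadj
    exact hadj.1 rfl

lemma power_colorable (hk : 2 * (τ + 1) ≤ k) (hk2 : k ≤ 2 * (τ + 1) + 1) :
    ((GG n τ).power k).Colorable (Fintype.card (ColorT n τ)) :=
  (SimpleGraph.Coloring.mk (col n τ) (fun h => col_valid hk hk2 h)).colorable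

end Upper

section Lists

variable {n τ k : ℕ}

def emb (n : ℕ) (f : Fin (n+1) → Z3) : Fin (n+2) → Z3 := Fin.cons 0 f

def yf (n : ℕ) (f : Fin (n+1) → Z3) (a : Z3) : Fin (n+2) → Z3 :=
  fun i => emb n f i + a

lemma yf_zero (f : Fin (n+1) → Z3) (a : Z3) : yf n f a 0 = a := by
  simp [yf, emb]

def Llist (n τ ub : ℕ) : Vtx n τ → Finset ℕ
  | Sum.inl y =>
      if y 0 = 0 then Finset.Ico 0 (2*ub)
      else if y 0 = 1 then Finset.Ico 0 ub ∪ Finset.Ico (2*ub) (3*ub)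
      else Finset.Ico ub (3*ub)
  | Sum.inr _ => Finset.Ico (3*ub) (5*ub)

lemma Llist_card (ub : ℕ) (v : Vtx n τ) : 2 * ub ≤ (Llist n τ ub v).card := by
  rcases v with y | ν
  · show 2 * ub ≤ (if y 0 = 0 then _ else if y 0 = 1 then _ else _ : Finset ℕ).card
    split_ifs
    · rw [Nat.card_Ico]; omega
    · rw [Finset.card_union_of_disjoint, Nat.card_Ico, Nat.card_Ico]
      · omega
      · apply Finset.disjoint_left.mpr
        intro x hx hy
        rw [Finset.mem_Ico] at hx hy
        omega
    · rw [Nat.card_Ico]; omega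
  · show 2 * ub ≤ (Finset.Ico (3*ub) (5*ub)).card
    rw [Nat.card_Ico]; omega

lemma Llist_subset (ub : ℕ) (y : Fin (n+2) → Z3) :
    Llist n τ ub (Sum.inl y) ⊆ Finset.Ico 0 (3*ub) := by
  show (if y 0 = 0 then _ else if y 0 = 1 then _ else _ : Finset ℕ) ⊆ _
  split_ifs <;> intro x hx <;>
    simp only [Finset.mem_Ico, Finset.mem_union] at hx ⊢ <;> omega

lemma not_choosable (hk : 2 * (τ + 1) ≤ k) {ub : ℕ} (hub : ub = 2 * 3^n - 1) :
    ¬ ((GG n τ).power k).Choosable (Llist n τ ub) := by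
  rintro ⟨φc, hmem, hprop⟩
  set T : (Fin (n+1) → Z3) → Finset ℕ := fun f =>
    {φc (Sum.inl (yf n f 0)), φc (Sum.inl (yf n f 1)), φc (Sum.inl (yf n f 2))}
    with hT
  -- memberships of the three colors
  have hm0 : ∀ f, φc (Sum.inl (yf n f 0)) ∈ Finset.Ico 0 (2*ub) := by
    intro f
    have h := hmem (Sum.inl (yf n f 0))
    show _ ∈ _
    rw [show (Finset.Ico 0 (2*ub)) =
      (if (yf n f 0) 0 = 0 then Finset.Ico 0 (2*ub)
       else if (yf n f 0) 0 = 1 then Finset.Ico 0 ub ∪ Finset.Ico (2*ub) (3*ub)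
       else Finset.Ico ub (3*ub)) by rw [yf_zero, if_pos rfl]]
    exact h
  have hm1 : ∀ f, φc (Sum.inl (yf n f 1)) ∈
      Finset.Ico 0 ub ∪ Finset.Ico (2*ub) (3*ub) := by
    intro f
    have h := hmem (Sum.inl (yf n f 1))
    rw [show (Finset.Ico 0 ub ∪ Finset.Ico (2*ub) (3*ub)) =
      (if (yf n f 1) 0 = 0 then Finset.Ico 0 (2*ub)
       else if (yf n f 1) 0 = 1 then Finset.Ico 0 ub ∪ Finset.Ico (2*ub) (3*ub)
       else Finset.Ico ub (3*ub)) by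
        rw [yf_zero, if_neg (by decide : ¬(1 : Z3) = 0), if_pos rfl]]
    exact h
  have hm2 : ∀ f, φc (Sum.inl (yf n f 2)) ∈ Finset.Ico ub (3*ub) := by
    intro f
    have h := hmem (Sum.inl (yf n f 2))
    rw [show (Finset.Ico ub (3*ub)) =
      (if (yf n f 2) 0 = 0 then Finset.Ico 0 (2*ub)
       else if (yf n f 2) 0 = 1 then Finset.Ico 0 ub ∪ Finset.Ico (2*ub) (3*ub)
       else Finset.Ico ub (3*ub)) by
        rw [yf_zero, if_neg (by decide : ¬(2 : Z3) = 0),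
          if_neg (by decide : ¬(2 : Z3) = 1)]]
    exact h
  -- each triple uses at least two colors
  have h2 : ∀ f, 2 ≤ (T f).card := by
    intro f
    by_contra hcard
    push_neg at hcard
    have hle1 : (T f).card ≤ 1 := by omega
    have hall := Finset.card_le_one.mp hle1
    have e01 : φc (Sum.inl (yf n f 0)) = φc (Sum.inl (yf n f 1)) := by
      apply hall <;> simp [hT]
    have e02 : φc (Sum.inl (yf n f 0)) = φc (Sum.inl (yf n f 2)) := by
      apply hall <;> simp [hT]
    have a0 := hm0 f
    have a1 := hm1 f
    have a2 := hm2 f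
    rw [← e01] at a1
    rw [← e02] at a2
    simp only [Finset.mem_Ico, Finset.mem_union] at a0 a1 a2
    omega
  -- colors of different triples are disjoint
  have hne_col : ∀ (f g : Fin (n+1) → Z3), f ≠ g → ∀ a b : Z3,
      φc (Sum.inl (yf n f a)) ≠ φc (Sum.inl (yf n g b)) := by
    intro f g hfg a b
    have hj : ∃ j, f j ≠ g j := by
      by_contra hc
      push_neg at hc
      exact hfg (funext hc)
    obtain ⟨j, hj⟩ := hj
    apply hprop
    apply adj_cross hk
    refine ⟨j.succ, 0, ?_⟩
    simp only [yf, emb, Fin.cons_succ, Fin.cons_zero]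
    intro hcontra
    apply hj
    linear_combination -hcontra
  have hdisj : ∀ f ∈ (Finset.univ : Finset (Fin (n+1) → Z3)), ∀ g ∈ Finset.univ,
      f ≠ g → Disjoint (T f) (T g) := by
    intro f _ g _ hfg
    rw [Finset.disjoint_left]
    intro x hx hy
    simp only [hT, Finset.mem_insert, Finset.mem_singleton] at hx hy
    rcases hx with rfl | rfl | rfl <;> rcases hy with h | h | h <;>
      exact hne_col f g hfg _ _ h
  -- counting
  have hcount := Finset.card_biUnion hdisj
  have hlow : 2 * 3^(n+1) ≤ ∑ f : Fin (n+1) → Z3, (T f).card := by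
    have := Finset.sum_le_sum (fun f (_ : f ∈ Finset.univ) => h2 f)
    rw [Finset.sum_const, Finset.card_univ] at this
    have hcard : Fintype.card (Fin (n+1) → Z3) = 3^(n+1) := by
      rw [Fintype.card_fun, ZMod.card, Fintype.card_fin]
    rw [hcard] at this
    simpa [mul_comm] using this
  have hup : (Finset.univ.biUnion T).card ≤ 3 * ub := by
    have hsub : Finset.univ.biUnion T ⊆ Finset.Ico 0 (3*ub) := by
      apply Finset.biUnion_subset.mpr
      intro f _
      intro x hx
      simp only [hT, Finset.mem_insert, Finset.mem_singleton] at hx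
      have s0 := Llist_subset (n := n) (τ := τ) ub (yf n f 0) (hmem (Sum.inl (yf n f 0)))
      have s1 := Llist_subset (n := n) (τ := τ) ub (yf n f 1) (hmem (Sum.inl (yf n f 1)))
      have s2 := Llist_subset (n := n) (τ := τ) ub (yf n f 2) (hmem (Sum.inl (yf n f 2)))
      rcases hx with rfl | rfl | rfl
      · exact s0
      · exact s1
      · exact s2
    calc (Finset.univ.biUnion T).card ≤ (Finset.Ico 0 (3*ub)).card :=
          Finset.card_le_card hsub
      _ = 3 * ub := by rw [Nat.card_Ico]; omega
  rw [hcount] at hup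
  have hpow : 1 ≤ 3^n := Nat.one_le_pow _ _ (by norm_num)
  have hpow1 : 3^(n+1) = 3 * 3^n := by rw [pow_succ]; ring
  omega

/-- Every graph on a fintype is choosable from lists of size the number of
vertices (via Hall's theorem). -/
lemma choosable_big (L : Vtx n τ → Finset ℕ)
    (hL : ∀ v, Fintype.card (Vtx n τ) ≤ (L v).card) :
    ((GG n τ).power k).Choosable L := by
  have hall : ∀ s : Finset (Vtx n τ), s.card ≤ (s.biUnion L).card := by
    intro s
    rcases s.eq_empty_or_nonempty with rfl | ⟨v0, hv0⟩
    · simp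
    · calc s.card ≤ Fintype.card (Vtx n τ) := Finset.card_le_univ s
        _ ≤ (L v0).card := hL v0
        _ ≤ (s.biUnion L).card :=
            Finset.card_le_card (Finset.subset_biUnion_of_mem L hv0)
  obtain ⟨φ, hinj, hmemφ⟩ :=
    (Finset.all_card_le_biUnion_card_iff_exists_injective L).mp hall
  exact ⟨φ, hmemφ, fun u v hadj heq => hadj.1 (hinj heq)⟩

lemma listChrom_ge (hk : 2 * (τ + 1) ≤ k) {ub : ℕ} (hub : ub = 2 * 3^n - 1) :
    2 * ub + 1 ≤ ((GG n τ).power k).listChromaticNumber := by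
  set S := {t : ℕ | ∀ L : Vtx n τ → Finset ℕ,
    (∀ v, t ≤ (L v).card) → ((GG n τ).power k).Choosable L} with hS
  have hne : S.Nonempty := by
    refine ⟨Fintype.card (Vtx n τ), ?_⟩
    intro L hL
    exact choosable_big L hL
  have hmem : sInf S ∈ S := Nat.sInf_mem hne
  show 2 * ub + 1 ≤ sInf S
  by_contra hlt
  push_neg at hlt
  have : ((GG n τ).power k).Choosable (Llist n τ ub) := by
    apply hmem
    intro v
    calc sInf S ≤ 2 * ub := by omega
      _ ≤ (Llist n τ ub v).card := Llist_card ub v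
  exact not_choosable hk hub this

end Lists

section Cards

variable {n τ k : ℕ}

def eRep (n : ℕ) : ColorRep n ≃ (Fin (n+1) → Z3) where
  toFun x := fun i => x.1 i.succ
  invFun f := ⟨Fin.cons 0 f, by simp⟩
  left_inv := by
    rintro ⟨x, hx⟩
    apply Subtype.ext
    funext i
    refine Fin.cases ?_ ?_ i
    · simpa using hx.symm
    · intro j; simp
  right_inv := by
    intro f; funext i; simp

lemma card_colorRep (n : ℕ) : Fintype.card (ColorRep n) = 3 ^ (n+1) := by
  rw [Fintype.card_congr (eRep n), Fintype.card_fun, ZMod.card, Fintype.card_fin]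

lemma card_nodeT_le (n τ : ℕ) :
    Fintype.card (NodeT n τ) ≤ 27 * (n+2)^2 * (τ+1) := by
  have hP : Fintype.card (PhiT (n+2)) ≤ 3 * (n+2)^2 := by
    have h := Fintype.card_subtype_le
      (fun q : (Fin (n+2) × Fin (n+2)) × Z3 => q.1.1 ≠ q.1.2)
    calc Fintype.card (PhiT (n+2))
        ≤ Fintype.card ((Fin (n+2) × Fin (n+2)) × Z3) := h
      _ = (n+2) * (n+2) * 3 := by
          rw [Fintype.card_prod, Fintype.card_prod, Fintype.card_fin, ZMod.card]
      _ ≤ 3 * (n+2)^2 := by ring_nf; omega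
  have hchain : Fintype.card (ChainT n τ) =
      Fintype.card (PhiT (n+2)) * (3 * (3 * τ)) := by
    calc Fintype.card (ChainT n τ)
        = Fintype.card (PhiT (n+2) × Z3 × Z3 × Fin τ) :=
          Fintype.card_congr (Equiv.cast rfl)
      _ = _ := by
          rw [Fintype.card_prod, Fintype.card_prod, Fintype.card_prod,
            ZMod.card, Fintype.card_fin]
  have hroot : Fintype.card (RootT n) = Fintype.card (PhiT (n+2)) * 3 := by
    calc Fintype.card (RootT n)
        = Fintype.card (PhiT (n+2) × Z3) := Fintype.card_congr (Equiv.cast rfl)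
      _ = _ := by rw [Fintype.card_prod, ZMod.card]
  have hnode : Fintype.card (NodeT n τ) =
      Fintype.card (ChainT n τ) + Fintype.card (RootT n) := by
    calc Fintype.card (NodeT n τ)
        = Fintype.card (ChainT n τ ⊕ RootT n) := Fintype.card_congr (Equiv.cast rfl)
      _ = _ := Fintype.card_sum
  set P := Fintype.card (PhiT (n+2))
  calc Fintype.card (NodeT n τ) = P * (3 * (3 * τ)) + P * 3 := by
        rw [hnode, hchain, hroot]
    _ = P * (9 * τ + 3) := by ring
    _ ≤ (3 * (n+2)^2) * (9 * τ + 3) := Nat.mul_le_mul_right _ hP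
    _ ≤ (3 * (n+2)^2) * (9 * (τ+1)) := Nat.mul_le_mul_left _ (by omega)
    _ = 27 * (n+2)^2 * (τ+1) := by ring

lemma card_colorT_le (n τ : ℕ) :
    Fintype.card (ColorT n τ) ≤ 3^(n+1) + 27 * (n+2)^2 * (τ+1) := by
  have h : Fintype.card (ColorT n τ) =
      Fintype.card (ColorRep n) + Fintype.card (NodeT n τ) := by
    calc Fintype.card (ColorT n τ)
        = Fintype.card (ColorRep n ⊕ NodeT n τ) := Fintype.card_congr (Equiv.cast rfl)
      _ = _ := Fintype.card_sum
  rw [h, card_colorRep]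
  exact Nat.add_le_add_left (card_nodeT_le n τ) _

lemma chrom_toNat_le (hk : 2 * (τ + 1) ≤ k) (hk2 : k ≤ 2 * (τ + 1) + 1) :
    (((GG n τ).power k).chromaticNumber).toNat ≤
      3^(n+1) + 27 * (n+2)^2 * (τ+1) := by
  have hle := (power_colorable (n := n) (τ := τ) hk hk2).chromaticNumber_le
  have h := ENat.toNat_le_toNat hle (ENat.coe_ne_top _)
  rw [ENat.toNat_coe] at h
  exact le_trans h (card_colorT_le n τ)

end Cards

/-- The main existence lemma. -/
lemma main (k s : ℕ) (hk : 2 ≤ k) (hs : 1 ≤ s) :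
    ∃ (V : Type) (_ : Fintype V) (G : SimpleGraph V),
      3 ^ (3 * s * k - 3) - 1 ≤
        (G.power k).listChromaticNumber - ((G.power k).chromaticNumber).toNat := by
  have ha2 : 2 ≤ s * k := le_trans (by omega) (Nat.mul_le_mul hs (le_refl k))
  set a := s * k with hadef
  set n := 3 * a + 3 * k + 20 with hn
  set τ := k / 2 - 1 with hτ
  have hτk : 2 * (τ + 1) ≤ k := by omega
  have hτk2 : k ≤ 2 * (τ + 1) + 1 := by omega
  refine ⟨Vtx n τ, inferInstance, GG n τ, ?_⟩
  have hχl := listChrom_ge (n := n) (τ := τ) (k := k) hτk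
    (rfl : (2 * 3^n - 1 : ℕ) = 2 * 3^n - 1)
  have hχ := chrom_toNat_le (n := n) (τ := τ) (k := k) hτk hτk2
  -- the power inequality
  have h1 : n + 2 ≤ 3 * (a + k + 8) := by omega
  have h2 : (n+2)^2 ≤ 9 * (a+k+8)^2 := by
    calc (n+2)^2 ≤ (3*(a+k+8))^2 := Nat.pow_le_pow_left h1 2
      _ = 9 * (a+k+8)^2 := by ring
  have h3 : a + k + 8 ≤ 3 ^ (a+k+8) := le_of_lt (Nat.lt_pow_self (by norm_num))
  have h4 : (a+k+8)^2 ≤ 3 ^ (2*(a+k+8)) := by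
    calc (a+k+8)^2 ≤ (3^(a+k+8))^2 := Nat.pow_le_pow_left h3 2
      _ = 3 ^ (2*(a+k+8)) := by rw [← pow_mul]; ring_nf
  have h5 : τ + 1 ≤ 3^k := le_of_lt (lt_of_le_of_lt (by omega) (Nat.lt_pow_self (n := k) (by norm_num)))
  have hX : 27*(n+2)^2*(τ+1) ≤ 3 ^ (2*a+3*k+21) := by
    calc 27*(n+2)^2*(τ+1) ≤ 27*(9*(a+k+8)^2)*(τ+1) := by
          exact Nat.mul_le_mul_right _ (Nat.mul_le_mul_left _ h2)
      _ ≤ 27*(9*(3^(2*(a+k+8))))*(3^k) := by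
          exact Nat.mul_le_mul (Nat.mul_le_mul_left _ (Nat.mul_le_mul_left _ h4)) h5
      _ = 243 * (3^(2*(a+k+8)) * 3^k) := by ring
      _ = 243 * 3^(2*(a+k+8)+k) := by rw [← pow_add]
      _ = 3^5 * 3^(2*(a+k+8)+k) := by norm_num
      _ = 3^(5+(2*(a+k+8)+k)) := by rw [← pow_add]
      _ ≤ 3 ^ (2*a+3*k+21) := Nat.pow_le_pow_right (by norm_num) (by omega)
  have hXW : 27*(n+2)^2*(τ+1) ≤ 3 ^ (3*a+3*k+19) :=
    le_trans hX (Nat.pow_le_pow_right (by norm_num) (by omega))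
  have hQW : 3^(3*a-3) ≤ 3^(3*a+3*k+19) :=
    Nat.pow_le_pow_right (by norm_num) (by omega)
  have h3n : (3:ℕ)^n = 3 * 3^(3*a+3*k+19) := by
    rw [show n = (3*a+3*k+19)+1 by omega, pow_succ]; ring
  have hsum : 3^(3*a-3) + 27*(n+2)^2*(τ+1) ≤ 3^n := by omega
  -- conclude
  have hE : 3 * s * k = 3 * a := by rw [hadef, mul_assoc]
  rw [hE]
  have hp1 : (1:ℕ) ≤ 3^n := Nat.one_le_pow _ _ (by norm_num)
  have h3n1 : (3:ℕ)^(n+1) = 3 * 3^n := by rw [pow_succ]; ring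
  omega

end PowerGap

/-- For every `k ≥ 2` and positive `s`, there is a graph `G` whose `k`th power has
`χ_l(G^k) - χ(G^k) ≥ 3^(3sk-3) - 1`; in particular, for any fixed `k ≥ 2` the gap
`χ_l(G^k) - χ(G^k)` over all graphs `G` is unbounded. -/
theorem power_gap_unbounded :
    (∀ k s : ℕ, 2 ≤ k → 1 ≤ s →
      ∃ (V : Type) (_ : Fintype V) (G : SimpleGraph V),
        3 ^ (3 * s * k - 3) - 1 ≤
          (G.power k).listChromaticNumber - ((G.power k).chromaticNumber).toNat) ∧
    (∀ k : ℕ, 2 ≤ k → ∀ N : ℕ,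
      ∃ (V : Type) (_ : Fintype V) (G : SimpleGraph V),
        N ≤ (G.power k).listChromaticNumber - ((G.power k).chromaticNumber).toNat) := by
  constructor
  · intro k s hk hs
    exact PowerGap.main k s hk hs
  · intro k hk N
    obtain ⟨V, iV, G, hG⟩ := PowerGap.main k (N+1) hk (by omega)
    refine ⟨V, iV, G, le_trans ?_ hG⟩
    have hb : (3*(N+1)) * 2 ≤ (3*(N+1)) * k := Nat.mul_le_mul_left _ hk
    have h2 : 3*(N+1)*k - 3 < 3 ^ (3*(N+1)*k - 3) := Nat.lt_pow_self (by norm_num)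
    omega
end

section
/- Let n ≥ 2 be an integer. For any two vertices y, z of G_{3n}, the distance satisfies d_{G_{3n}}(y, z) ≤ 2n, and d_{G_{3n}}(y, z) = 2n if and only if y − z ∈ {a_{3n}, b_{3n}}, where a_{3n} = (1,1,…,1) and b_{3n} = (2,2,…,2) in Z_3^{3n}. -/
open SimpleGraph

namespace GmAux

variable {m : ℕ}

/-- Potential `F1 w = p + 2q` where `p,q` count coordinates equal to `1,2`. -/
def F1 (w : Fin m → ZMod 3) : ℕ := ∑ l, (w l).val

/-- Potential `F2 w = 2p + q`. -/
def F2 (w : Fin m → ZMod 3) : ℕ := ∑ l, (2 * w l).val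

/-- The maximum of the two potentials; `MF w / 3` is the distance from `0` to `w`. -/
def MF (w : Fin m → ZMod 3) : ℕ := max (F1 w) (F2 w)

lemma sum_split {β : Type*} [AddCommMonoid β] (i j : Fin m) (hij : i ≠ j) (h : Fin m → β) :
    ∑ l, h l = (∑ l ∈ (Finset.univ.erase i).erase j, h l) + h j + h i := by
  rw [Finset.sum_erase_add _ _ (Finset.mem_erase.2 ⟨hij.symm, Finset.mem_univ j⟩),
      Finset.sum_erase_add _ _ (Finset.mem_univ i)]

lemma xvec_apply_left (i j : Fin m) : xvec m i j i = 1 := by simp [xvec]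

lemma xvec_apply_right {i j : Fin m} (hij : i ≠ j) : xvec m i j j = 2 := by
  simp [xvec, hij.symm]

lemma xvec_apply_other {i j l : Fin m} (h1 : l ≠ i) (h2 : l ≠ j) : xvec m i j l = 0 := by
  simp [xvec, h1, h2]

lemma sum_xvec {i j : Fin m} (hij : i ≠ j) : ∑ l, xvec m i j l = 0 := by
  rw [sum_split i j hij, xvec_apply_left, xvec_apply_right hij,
    Finset.sum_eq_zero (fun l hl => by
      rcases Finset.mem_erase.1 hl with ⟨hlj, hl'⟩
      exact xvec_apply_other (Finset.mem_erase.1 hl').1 hlj)]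
  decide

lemma sum_g_sub_xvec (g : ZMod 3 → ℕ) (w : Fin m → ZMod 3) {i j : Fin m} (hij : i ≠ j) :
    (∑ l, g ((w - xvec m i j) l)) + g (w j) + g (w i)
      = (∑ l, g (w l)) + g (w j - 2) + g (w i - 1) := by
  rw [sum_split i j hij (fun l => g ((w - xvec m i j) l)), sum_split i j hij (fun l => g (w l))]
  have he : ∀ l ∈ (Finset.univ.erase i).erase j,
      g ((w - xvec m i j) l) = g (w l) := by
    intro l hl
    rcases Finset.mem_erase.1 hl with ⟨hlj, hl'⟩
    rw [Pi.sub_apply, xvec_apply_other (Finset.mem_erase.1 hl').1 hlj, sub_zero]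
  rw [Finset.sum_congr rfl he, Pi.sub_apply, Pi.sub_apply, xvec_apply_left,
    xvec_apply_right hij]
  ring

lemma F1_sub_xvec (w : Fin m → ZMod 3) {i j : Fin m} (hij : i ≠ j) :
    F1 (w - xvec m i j) + (w j).val + (w i).val = F1 w + (w j - 2).val + (w i - 1).val :=
  sum_g_sub_xvec (fun a => a.val) w hij

lemma F2_sub_xvec (w : Fin m → ZMod 3) {i j : Fin m} (hij : i ≠ j) :
    F2 (w - xvec m i j) + (2 * w j).val + (2 * w i).val
      = F2 w + (2 * (w j - 2)).val + (2 * (w i - 1)).val :=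
  sum_g_sub_xvec (fun a => (2 * a).val) w hij

lemma zmod3_cases : ∀ a : ZMod 3, a = 0 ∨ a = 1 ∨ a = 2 := by decide

lemma dvd_F1 (w : Fin m → ZMod 3) (hw : ∑ l, w l = 0) : 3 ∣ F1 w := by
  rw [← ZMod.natCast_eq_zero_iff, F1]
  push_cast
  rw [Finset.sum_congr rfl (fun l _ => ZMod.natCast_zmod_val (w l))]
  exact hw

lemma dvd_F2 (w : Fin m → ZMod 3) (hw : ∑ l, w l = 0) : 3 ∣ F2 w := by
  rw [← ZMod.natCast_eq_zero_iff, F2]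
  push_cast
  rw [Finset.sum_congr rfl (fun l _ => ZMod.natCast_zmod_val (2 * w l)),
    ← Finset.mul_sum, hw, mul_zero]

lemma step_A (w : Fin m → ZMod 3) {i j : Fin m} (hij : i ≠ j) (hi : w i = 1) (hj : w j = 2) :
    MF (w - xvec m i j) + 3 = MF w := by
  have e1 := F1_sub_xvec w hij
  have e2 := F2_sub_xvec w hij
  rw [hi, hj] at e1 e2
  simp only [show ((2:ZMod 3)).val = 2 from by decide, show ((1:ZMod 3)).val = 1 from by decide,
    show ((2:ZMod 3) - 2) = 0 from by decide, show ((1:ZMod 3) - 1) = 0 from by decide,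
    show ((0:ZMod 3)).val = 0 from by decide, show ((2*2:ZMod 3)).val = 1 from by decide,
    show ((2*1:ZMod 3)).val = 2 from by decide, mul_zero]
    at e1 e2
  have hF1 : F1 (w - xvec m i j) + 3 = F1 w := by omega
  have hF2 : F2 (w - xvec m i j) + 3 = F2 w := by omega
  rw [MF, MF, ← hF1, ← hF2, max_add_add_right]

lemma step_B (w : Fin m → ZMod 3) (hw : ∑ l, w l = 0) {i j : Fin m} (hij : i ≠ j)
    (hi : w i = 1) (hj : w j = 1) (h2 : ∀ l, w l ≠ 2) :
    MF (w - xvec m i j) + 3 = MF w := by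
  have e1 := F1_sub_xvec w hij
  have e2 := F2_sub_xvec w hij
  rw [hi, hj] at e1 e2
  simp only [show ((1:ZMod 3)).val = 1 from by decide,
    show ((1:ZMod 3) - 2) = 2 from by decide, show ((1:ZMod 3) - 1) = 0 from by decide,
    show ((2:ZMod 3)).val = 2 from by decide,
    show ((0:ZMod 3)).val = 0 from by decide, show ((2*2:ZMod 3)).val = 1 from by decide,
    show ((2*1:ZMod 3)).val = 2 from by decide, mul_zero]
    at e1 e2
  have hdouble : F2 w = 2 * F1 w := by
    rw [F1, F2, Finset.mul_sum]
    refine Finset.sum_congr rfl fun l _ => ?_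
    rcases zmod3_cases (w l) with h | h | h
    · rw [h]; decide
    · rw [h]; decide
    · exact absurd h (h2 l)
  have hpos : 1 ≤ F1 w := by
    have h := Finset.single_le_sum (f := fun l => (w l).val) (fun l _ => Nat.zero_le _)
      (Finset.mem_univ i)
    simp only [hi, show ((1:ZMod 3)).val = 1 from by decide] at h
    exact h
  have hdvd := dvd_F1 w hw
  have hge3 : 3 ≤ F1 w := by omega
  have m1 : MF w = F2 w := max_eq_right (by omega)
  have m2 : MF (w - xvec m i j) = F2 (w - xvec m i j) := max_eq_right (by omega)
  omega

lemma step_C (w : Fin m → ZMod 3) (hw : ∑ l, w l = 0) {i j : Fin m} (hij : i ≠ j)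
    (hi : w i = 2) (hj : w j = 2) (h1 : ∀ l, w l ≠ 1) :
    MF (w - xvec m i j) + 3 = MF w := by
  have e1 := F1_sub_xvec w hij
  have e2 := F2_sub_xvec w hij
  rw [hi, hj] at e1 e2
  simp only [show ((1:ZMod 3)).val = 1 from by decide,
    show ((2:ZMod 3) - 2) = 0 from by decide, show ((2:ZMod 3) - 1) = 1 from by decide,
    show ((2:ZMod 3)).val = 2 from by decide,
    show ((0:ZMod 3)).val = 0 from by decide, show ((2*2:ZMod 3)).val = 1 from by decide,
    show ((2*1:ZMod 3)).val = 2 from by decide, mul_zero]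
    at e1 e2
  have hdouble : F1 w = 2 * F2 w := by
    rw [F1, F2, Finset.mul_sum]
    refine Finset.sum_congr rfl fun l _ => ?_
    rcases zmod3_cases (w l) with h | h | h
    · rw [h]; decide
    · exact absurd h (h1 l)
    · rw [h]; decide
  have hpos : 1 ≤ F2 w := by
    have h := Finset.single_le_sum (f := fun l => (2 * w l).val) (fun l _ => Nat.zero_le _)
      (Finset.mem_univ i)
    simp only [hi, show ((2 * 2:ZMod 3)).val = 1 from by decide] at h
    exact h
  have hdvd := dvd_F2 w hw
  have hge3 : 3 ≤ F2 w := by omega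
  have m1 : MF w = F1 w := max_eq_left (by omega)
  have m2 : MF (w - xvec m i j) = F1 (w - xvec m i j) := max_eq_left (by omega)
  omega

lemma F2_add_le (u v : Fin m → ZMod 3) : F2 (u + v) ≤ F2 u + F2 v := by
  rw [F2, F2, F2, ← Finset.sum_add_distrib]
  refine Finset.sum_le_sum fun l _ => ?_
  have h : ∀ a b : ZMod 3, (2 * (a + b)).val ≤ (2 * a).val + (2 * b).val := by decide
  simpa [mul_add] using h (u l) (v l)

lemma F2_xvec {i j : Fin m} (hij : i ≠ j) : F2 (xvec m i j) = 3 := by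
  rw [F2, sum_split i j hij, xvec_apply_left, xvec_apply_right hij,
    Finset.sum_eq_zero (fun l hl => by
      rcases Finset.mem_erase.1 hl with ⟨hlj, hl'⟩
      rw [xvec_apply_other (Finset.mem_erase.1 hl').1 hlj]
      decide)]
  decide

/-- Lower bound: every walk in `Gm m` from `y` to `z` has length at least `F2 (y - z) / 3`. -/
lemma lower_bound {y z : GammaVert m} (p : (Gm m).Walk y z) :
    F2 (y.1 - z.1) ≤ 3 * p.length := by
  induction p with
  | nil =>
    have h0 : F2 (0 : Fin m → ZMod 3) = 0 := by
      rw [F2]; exact Finset.sum_eq_zero fun l _ => by simp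
    simp only [SimpleGraph.Walk.length_nil, mul_zero, sub_self, h0, le_refl]
  | @cons a b c h q ih =>
    obtain ⟨i, j, hij, hx⟩ := h
    have hsum : a.1 - c.1 = xvec m i j + (b.1 - c.1) := by rw [← hx]; ring
    have h1 := F2_add_le (xvec m i j) (b.1 - c.1)
    rw [F2_xvec hij] at h1
    rw [hsum]
    show F2 (xvec m i j + (b.1 - c.1)) ≤ 3 * (q.length + 1)
    omega

lemma sum_coords {y z : GammaVert m} : ∑ l, (y.1 - z.1) l = 0 := by
  simp only [Pi.sub_apply]
  rw [Finset.sum_sub_distrib, y.2, z.2, sub_zero]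

/-- Upper bound: there is a walk from `y` to `z` of length at most `MF (y - z) / 3`. -/
lemma exists_short_walk (m : ℕ) : ∀ (k : ℕ) (y z : GammaVert m), MF (y.1 - z.1) ≤ k →
    ∃ p : (Gm m).Walk y z, 3 * p.length ≤ MF (y.1 - z.1) := by
  intro k
  induction k with
  | zero =>
    intro y z h
    have hF1 : F1 (y.1 - z.1) = 0 := by
      have := le_max_left (F1 (y.1 - z.1)) (F2 (y.1 - z.1))
      rw [← MF] at this
      omega
    have hyz : y = z := by
      refine Subtype.ext (funext fun l => ?_)
      rw [F1] at hF1
      have := (Finset.sum_eq_zero_iff).1 hF1 l (Finset.mem_univ l)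
      have h0 : (y.1 - z.1) l = 0 := by
        have := (ZMod.val_eq_zero _).1 this
        simpa using this
      have := sub_eq_zero.1 (by simpa using h0)
      exact this
    subst hyz
    exact ⟨SimpleGraph.Walk.nil, by simp⟩
  | succ k ih =>
    intro y z h
    by_cases hzero : y.1 = z.1
    · have hyz : y = z := Subtype.ext hzero
      subst hyz
      exact ⟨SimpleGraph.Walk.nil, by simp⟩
    · set w := y.1 - z.1 with hw
      have hsum : ∑ l, w l = 0 := sum_coords
      have main : ∀ i j : Fin m, i ≠ j → MF (w - xvec m i j) + 3 = MF w →
          ∃ p : (Gm m).Walk y z, 3 * p.length ≤ MF w := by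
        intro i j hij hstep
        set y' : GammaVert m :=
          ⟨y.1 - xvec m i j, by
            simp only [Pi.sub_apply]
            rw [Finset.sum_sub_distrib, y.2, sum_xvec hij, sub_zero]⟩ with hy'
        have hadj : (Gm m).Adj y y' := ⟨i, j, hij, sub_sub_cancel _ _⟩
        have hw' : y'.1 - z.1 = w - xvec m i j := by
          show y.1 - xvec m i j - z.1 = (y.1 - z.1) - xvec m i j
          ring
        obtain ⟨p, hp⟩ := ih y' z (by rw [hw']; omega)
        rw [hw'] at hp
        exact ⟨SimpleGraph.Walk.cons hadj p, by
          rw [SimpleGraph.Walk.length_cons]; omega⟩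
      by_cases h1 : ∃ i, w i = 1 <;> by_cases h2 : ∃ j, w j = 2
      · obtain ⟨i, hi⟩ := h1
        obtain ⟨j, hj⟩ := h2
        have hij : i ≠ j := by rintro rfl; rw [hi] at hj; exact absurd hj (by decide)
        exact main i j hij (step_A w hij hi hj)
      · push_neg at h2
        obtain ⟨i0, hi0⟩ := h1
        have hcard : (Finset.univ.filter (fun l => w l = 1)).card = F1 w := by
          rw [Finset.card_filter, F1]
          refine Finset.sum_congr rfl fun l _ => ?_
          rcases zmod3_cases (w l) with h | h | h
          · rw [h]; decide
          · rw [h]; decide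
          · exact absurd h (h2 l)
        have hpos : 1 ≤ F1 w := by
          have h := Finset.single_le_sum (f := fun l => (w l).val) (fun l _ => Nat.zero_le _)
            (Finset.mem_univ i0)
          simp only [hi0, show ((1:ZMod 3)).val = 1 from by decide] at h
          exact h
        have hdvd := dvd_F1 w hsum
        have hlt : 1 < (Finset.univ.filter (fun l => w l = 1)).card := by omega
        obtain ⟨i, hi, j, hj, hij⟩ := Finset.one_lt_card.1 hlt
        rw [Finset.mem_filter] at hi hj
        exact main i j hij (step_B w hsum hij hi.2 hj.2 h2)
      · push_neg at h1
        obtain ⟨j0, hj0⟩ := h2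
        have hcard : (Finset.univ.filter (fun l => w l = 2)).card = F2 w := by
          rw [Finset.card_filter, F2]
          refine Finset.sum_congr rfl fun l _ => ?_
          rcases zmod3_cases (w l) with h | h | h
          · rw [h]; decide
          · exact absurd h (h1 l)
          · rw [h]; decide
        have hpos : 1 ≤ F2 w := by
          have h := Finset.single_le_sum (f := fun l => (2 * w l).val) (fun l _ => Nat.zero_le _)
            (Finset.mem_univ j0)
          simp only [hj0, show ((2 * 2:ZMod 3)).val = 1 from by decide] at h
          exact h
        have hdvd := dvd_F2 w hsum
        have hlt : 1 < (Finset.univ.filter (fun l => w l = 2)).card := by omega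
        obtain ⟨i, hi, j, hj, hij⟩ := Finset.one_lt_card.1 hlt
        rw [Finset.mem_filter] at hi hj
        exact main i j hij (step_C w hsum hij hi.2 hj.2 h1)
      · exfalso
        push_neg at h1 h2
        apply hzero
        funext l
        rcases zmod3_cases (w l) with h | h | h
        · have : y.1 l - z.1 l = 0 := h
          linear_combination (norm := abel) this
        · exact absurd h (h1 l)
        · exact absurd h (h2 l)

lemma F1_le (w : Fin m → ZMod 3) : F1 w ≤ 2 * m := by
  have h : ∀ l, (w l).val ≤ 2 := fun l => by
    rcases zmod3_cases (w l) with h | h | h <;> rw [h] <;> decide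
  calc F1 w ≤ ∑ _l : Fin m, 2 := Finset.sum_le_sum fun l _ => h l
    _ = 2 * m := by simp [Finset.sum_const, mul_comm]

lemma F2_le (w : Fin m → ZMod 3) : F2 w ≤ 2 * m := by
  have h : ∀ l, (2 * w l).val ≤ 2 := fun l => by
    rcases zmod3_cases (w l) with h | h | h <;> rw [h] <;> decide
  calc F2 w ≤ ∑ _l : Fin m, 2 := Finset.sum_le_sum fun l _ => h l
    _ = 2 * m := by simp [Finset.sum_const, mul_comm]

lemma F2_all_one : F2 (fun _ => (1 : ZMod 3) : Fin m → ZMod 3) = 2 * m := by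
  rw [F2]
  simp only [show ((2 * 1 : ZMod 3)).val = 2 from by decide]
  simp [Finset.sum_const, mul_comm]

lemma F1_lt (w : Fin m → ZMod 3) (hne : w ≠ fun _ => 2) : F1 w < 2 * m := by
  obtain ⟨l0, hl0⟩ := Function.ne_iff.1 hne
  have h : ∀ l, (w l).val ≤ 2 := fun l => by
    rcases zmod3_cases (w l) with h | h | h <;> rw [h] <;> decide
  have hlt : (w l0).val < 2 := by
    rcases zmod3_cases (w l0) with h | h | h
    · rw [h]; decide
    · rw [h]; decide
    · exact absurd h hl0
  calc F1 w < ∑ _l : Fin m, 2 :=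
      Finset.sum_lt_sum (fun l _ => h l) ⟨l0, Finset.mem_univ l0, hlt⟩
    _ = 2 * m := by simp [Finset.sum_const, mul_comm]

lemma F2_lt (w : Fin m → ZMod 3) (hne : w ≠ fun _ => 1) : F2 w < 2 * m := by
  obtain ⟨l0, hl0⟩ := Function.ne_iff.1 hne
  have h : ∀ l, (2 * w l).val ≤ 2 := fun l => by
    rcases zmod3_cases (w l) with h | h | h <;> rw [h] <;> decide
  have hlt : (2 * w l0).val < 2 := by
    rcases zmod3_cases (w l0) with h | h | h
    · rw [h]; decide
    · exact absurd h hl0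
    · rw [h]; decide
  calc F2 w < ∑ _l : Fin m, 2 :=
      Finset.sum_lt_sum (fun l _ => h l) ⟨l0, Finset.mem_univ l0, hlt⟩
    _ = 2 * m := by simp [Finset.sum_const, mul_comm]

/-- If `y - z` is the all-ones vector, the distance is exactly `2m/3`. -/
lemma dist_all_one (y z : GammaVert m) (h : y.1 - z.1 = fun _ => (1 : ZMod 3)) :
    3 * (Gm m).dist y z = 2 * m := by
  obtain ⟨p, hp⟩ := exists_short_walk m (MF (y.1 - z.1)) y z le_rfl
  have hreach : (Gm m).Reachable y z := ⟨p⟩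
  obtain ⟨q, hq⟩ := hreach.exists_walk_length_eq_dist
  have hlow := lower_bound q
  have hF2 : F2 (y.1 - z.1) = 2 * m := by rw [h]; exact F2_all_one
  have hMF : MF (y.1 - z.1) ≤ 2 * m := max_le (F1_le _) (F2_le _)
  have hd1 : (Gm m).dist y z ≤ p.length := SimpleGraph.dist_le p
  omega

end GmAux

/-- Let `n ≥ 2`. For any two vertices `y, z` of `G_{3n}`, `d(y,z) ≤ 2n`, and
`d(y,z) = 2n` iff `y - z ∈ {a_{3n}, b_{3n}}` where `a = (1,…,1)`, `b = (2,…,2)`. -/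
theorem dist_le_two_n (n : ℕ) (hn : 2 ≤ n) (y z : GammaVert (3 * n)) :
    (Gm (3 * n)).dist y z ≤ 2 * n ∧
    ((Gm (3 * n)).dist y z = 2 * n ↔
      y.1 - z.1 = (fun _ => 1 : Fin (3 * n) → ZMod 3) ∨
      y.1 - z.1 = (fun _ => 2 : Fin (3 * n) → ZMod 3)) := by
  classical
  obtain ⟨p, hp⟩ := GmAux.exists_short_walk (3 * n) (GmAux.MF (y.1 - z.1)) y z le_rfl
  have hMF : GmAux.MF (y.1 - z.1) ≤ 2 * (3 * n) := max_le (GmAux.F1_le _) (GmAux.F2_le _)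
  have hd1 : (Gm (3 * n)).dist y z ≤ p.length := SimpleGraph.dist_le p
  have hub : (Gm (3 * n)).dist y z ≤ 2 * n := by omega
  refine ⟨hub, ?_, ?_⟩
  · intro hdist
    by_contra hne
    push_neg at hne
    obtain ⟨hne1, hne2⟩ := hne
    have hsum : ∑ l, (y.1 - z.1) l = 0 := GmAux.sum_coords
    have hlt1 := GmAux.F1_lt (y.1 - z.1) hne2
    have hlt2 := GmAux.F2_lt (y.1 - z.1) hne1
    have hdvd1 := GmAux.dvd_F1 (y.1 - z.1) hsum
    have hdvd2 := GmAux.dvd_F2 (y.1 - z.1) hsum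
    have hMF' : GmAux.MF (y.1 - z.1) ≤ 2 * (3 * n) - 3 := by
      rw [GmAux.MF]; omega
    omega
  · rintro (h | h)
    · have := GmAux.dist_all_one y z h
      omega
    · have h' : z.1 - y.1 = fun _ => (1 : ZMod 3) := by
        funext l
        have hl := congrFun h l
        simp only [Pi.sub_apply] at hl ⊢
        have : z.1 l - y.1 l = -(y.1 l - z.1 l) := by ring
        rw [this, hl]
        decide
      have := GmAux.dist_all_one z y h'
      rw [SimpleGraph.dist_comm] at this
      omega
end

section
/- Let n ≥ 2 be an integer and let H_{3n} = G_{3n} □ K_3 be the Cartesian product of G_{3n} and the complete graph K_3. Then the (2n)th power H_{3n}^{2n} is isomorphic to the lexicographic product K_{3^{3n−2}}[K_3 □ K_3] of the complete graph on 3^{3n−2} vertices with the graph K_3 □ K_3. -/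
open SimpleGraph

namespace PIL

def wA : ZMod 3 → ℤ := fun t => if t = 1 then 2 else if t = 2 then 1 else 0
def wB : ZMod 3 → ℤ := fun t => if t = 1 then 1 else if t = 2 then 2 else 0

variable {m : ℕ}

def SA (d : Fin m → ZMod 3) : ℤ := ∑ l, wA (d l)
def SB (d : Fin m → ZMod 3) : ℤ := ∑ l, wB (d l)
def Nv (d : Fin m → ZMod 3) : ℤ := max (SA d) (SB d)

lemma wA_nonneg (t : ZMod 3) : 0 ≤ wA t := by revert t; decide
lemma wB_nonneg (t : ZMod 3) : 0 ≤ wB t := by revert t; decide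
lemma wA_le (t : ZMod 3) : wA t ≤ 2 := by revert t; decide
lemma wB_le (t : ZMod 3) : wB t ≤ 2 := by revert t; decide

lemma SA_nonneg (d : Fin m → ZMod 3) : 0 ≤ SA d :=
  Finset.sum_nonneg fun l _ => wA_nonneg _
lemma SB_nonneg (d : Fin m → ZMod 3) : 0 ≤ SB d :=
  Finset.sum_nonneg fun l _ => wB_nonneg _
lemma Nv_nonneg (d : Fin m → ZMod 3) : 0 ≤ Nv d := le_max_of_le_left (SA_nonneg d)

lemma SA_le (d : Fin m → ZMod 3) : SA d ≤ 2 * m := by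
  calc SA d ≤ ∑ _l : Fin m, (2:ℤ) := Finset.sum_le_sum fun l _ => wA_le _
  _ = 2 * m := by simp [mul_comm]
lemma SB_le (d : Fin m → ZMod 3) : SB d ≤ 2 * m := by
  calc SB d ≤ ∑ _l : Fin m, (2:ℤ) := Finset.sum_le_sum fun l _ => wB_le _
  _ = 2 * m := by simp [mul_comm]
lemma Nv_le (d : Fin m → ZMod 3) : Nv d ≤ 2 * m := max_le (SA_le d) (SB_le d)

lemma wB_cast (t : ZMod 3) : ((wB t : ℤ) : ZMod 3) = t := by revert t; decide
lemma wAB_cast (t : ZMod 3) : ((wA t + wB t : ℤ) : ZMod 3) = 0 := by revert t; decide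

lemma dvd_SB (d : Fin m → ZMod 3) (h : ∑ l, d l = 0) : (3:ℤ) ∣ SB d := by
  have hz : ((SB d : ℤ) : ZMod 3) = 0 := by
    push_cast [SB]
    calc (∑ l, ((wB (d l) : ℤ) : ZMod 3)) = ∑ l, d l := by
          exact Finset.sum_congr rfl fun l _ => wB_cast _
      _ = 0 := h
  exact_mod_cast (ZMod.intCast_zmod_eq_zero_iff_dvd _ 3).mp hz

lemma dvd_SA (d : Fin m → ZMod 3) (h : ∑ l, d l = 0) : (3:ℤ) ∣ SA d := by
  have h1 : (3:ℤ) ∣ SA d + SB d := by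
    have hz : ((SA d + SB d : ℤ) : ZMod 3) = 0 := by
      push_cast [SA, SB]
      rw [← Finset.sum_add_distrib]
      calc (∑ l, (((wA (d l) : ℤ) : ZMod 3) + ((wB (d l) : ℤ):ZMod 3)))
          = ∑ l, (0 : ZMod 3) := Finset.sum_congr rfl fun l _ => by
            have := wAB_cast (d l); push_cast at this ⊢; linear_combination this
        _ = 0 := by simp
    exact_mod_cast (ZMod.intCast_zmod_eq_zero_iff_dvd _ 3).mp hz
  have h2 := dvd_SB d h
  omega

lemma dvd_Nv (d : Fin m → ZMod 3) (h : ∑ l, d l = 0) : (3:ℤ) ∣ Nv d := by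
  rcases max_choice (SA d) (SB d) with h' | h' <;> rw [Nv, h']
  · exact dvd_SA d h
  · exact dvd_SB d h

lemma sum_support_pair {i j : Fin m} (hij : i ≠ j) (f : Fin m → ℤ)
    (h : ∀ l, l ≠ i → l ≠ j → f l = 0) : ∑ l, f l = f i + f j := by
  rw [← Finset.sum_pair hij]
  refine (Finset.sum_subset (Finset.subset_univ _) ?_).symm
  intro x _ hx
  simp only [Finset.mem_insert, Finset.mem_singleton] at hx
  push_neg at hx
  exact h x hx.1 hx.2

lemma sub_xvec_apply (d : Fin m → ZMod 3) {i j l : Fin m} :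
    (d - xvec m i j) l = d l - xvec m i j l := rfl

lemma SA_sub (d : Fin m → ZMod 3) {i j : Fin m} (hij : i ≠ j) :
    SA (d - xvec m i j) = SA d + (wA (d i - 1) - wA (d i)) + (wA (d j - 2) - wA (d j)) := by
  have key : SA (d - xvec m i j) - SA d
      = (wA (d i - 1) - wA (d i)) + (wA (d j - 2) - wA (d j)) := by
    rw [SA, SA, ← Finset.sum_sub_distrib]
    rw [sum_support_pair hij]
    · congr 2 <;> simp [sub_xvec_apply, xvec, hij, if_neg hij.symm]
    · intro l hl1 hl2
      simp [sub_xvec_apply, xvec, hl1, hl2]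
  linarith

lemma SB_sub (d : Fin m → ZMod 3) {i j : Fin m} (hij : i ≠ j) :
    SB (d - xvec m i j) = SB d + (wB (d i - 1) - wB (d i)) + (wB (d j - 2) - wB (d j)) := by
  have key : SB (d - xvec m i j) - SB d
      = (wB (d i - 1) - wB (d i)) + (wB (d j - 2) - wB (d j)) := by
    rw [SB, SB, ← Finset.sum_sub_distrib]
    rw [sum_support_pair hij]
    · congr 2 <;> simp [sub_xvec_apply, xvec, hij, if_neg hij.symm]
    · intro l hl1 hl2
      simp [sub_xvec_apply, xvec, hl1, hl2]
  linarith

lemma wA_step1 (t : ZMod 3) : -2 ≤ wA (t - 1) - wA t ∧ wA (t - 1) - wA t ≤ 1 := by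
  revert t; decide
lemma wA_step2 (t : ZMod 3) : -1 ≤ wA (t - 2) - wA t ∧ wA (t - 2) - wA t ≤ 2 := by
  revert t; decide
lemma wB_step1 (t : ZMod 3) : -1 ≤ wB (t - 1) - wB t ∧ wB (t - 1) - wB t ≤ 2 := by
  revert t; decide
lemma wB_step2 (t : ZMod 3) : -2 ≤ wB (t - 2) - wB t ∧ wB (t - 2) - wB t ≤ 1 := by
  revert t; decide

/-- one step changes `Nv` by at most 3 (the direction needed for the lower bound). -/
lemma Nv_step_lb (d : Fin m → ZMod 3) {i j : Fin m} (hij : i ≠ j) :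
    Nv d - 3 ≤ Nv (d - xvec m i j) := by
  have hA := SA_sub d hij
  have hB := SB_sub d hij
  have a1 := wA_step1 (d i); have a2 := wA_step2 (d j)
  have b1 := wB_step1 (d i); have b2 := wB_step2 (d j)
  have h1 : SA d - 3 ≤ SA (d - xvec m i j) := by omega
  have h2 : SB d - 3 ≤ SB (d - xvec m i j) := by omega
  rw [Nv, Nv]
  rcases max_choice (SA d) (SB d) with h | h <;> rw [h]
  · exact le_max_of_le_left h1
  · exact le_max_of_le_right h2


lemma zmod3_cases (t : ZMod 3) (h1 : t ≠ 1) (h2 : t ≠ 2) : t = 0 := by revert t; decide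

/-- In every nonzero sum-zero direction there is a step decreasing `Nv` by 3. -/
lemma exists_step (d : Fin m → ZMod 3) (hd : d ≠ 0) (hs : ∑ l, d l = 0) :
    ∃ i j : Fin m, i ≠ j ∧ Nv (d - xvec m i j) ≤ Nv d - 3 := by
  have h3B := dvd_SB d hs
  by_cases h1 : ∃ i, d i = 1
  · obtain ⟨i, hi⟩ := h1
    by_cases h2 : ∃ j, d j = 2
    · -- a 1 and a 2: cancel both
      obtain ⟨j, hj⟩ := h2
      have hij : i ≠ j := by rintro rfl; rw [hi] at hj; exact (by decide : (1:ZMod 3) ≠ 2) hj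
      refine ⟨i, j, hij, ?_⟩
      have hA := SA_sub d hij
      have hB := SB_sub d hij
      rw [hi, hj] at hA hB
      have eA : wA ((1:ZMod 3) - 1) - wA 1 = -2 := by decide
      have eA2 : wA ((2:ZMod 3) - 2) - wA 2 = -1 := by decide
      have eB : wB ((1:ZMod 3) - 1) - wB 1 = -1 := by decide
      have eB2 : wB ((2:ZMod 3) - 2) - wB 2 = -2 := by decide
      rw [eA, eA2] at hA
      rw [eB, eB2] at hB
      have hle1 : SB d ≤ SA d ⊔ SB d := le_max_right _ _
      have hle2 : SA d ≤ SA d ⊔ SB d := le_max_left _ _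
      rw [Nv, Nv, hA, hB]
      exact max_le (by linarith) (by linarith)
    · -- only 1's present
      push_neg at h2
      have hval : ∀ l, d l = 0 ∨ d l = 1 := by
        intro l
        rcases eq_or_ne (d l) 1 with h | h
        · exact Or.inr h
        · exact Or.inl (zmod3_cases _ h (h2 l))
      have hAB : SA d = 2 * SB d := by
        rw [SA, SB, Finset.mul_sum]
        refine Finset.sum_congr rfl fun l _ => ?_
        rcases hval l with h | h <;> rw [h] <;> decide
      have hSB1 : 1 ≤ SB d := by
        have : wB (d i) ≤ SB d := Finset.single_le_sum (fun l _ => wB_nonneg _) (Finset.mem_univ i)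
        rw [hi] at this
        exact le_trans (by decide) this
      have hSB3 : 3 ≤ SB d := Int.le_of_dvd (by linarith) h3B
      -- find a second coordinate equal to 1
      have hsum : ∑ l ∈ Finset.univ.erase i, wB (d l) ≠ 0 := by
        have htot : wB (d i) + ∑ l ∈ Finset.univ.erase i, wB (d l) = SB d :=
          Finset.add_sum_erase Finset.univ (fun l => wB (d l)) (Finset.mem_univ i)
        rw [hi, (by decide : wB (1:ZMod 3) = 1)] at htot
        intro h0
        rw [h0] at htot
        linarith
      obtain ⟨j, hjmem, hj0⟩ := Finset.exists_ne_zero_of_sum_ne_zero hsum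
      have hji : j ≠ i := (Finset.mem_erase.mp hjmem).1
      have hj : d j = 1 := by
        rcases hval j with h | h
        · exact absurd (by rw [h]; decide) hj0
        · exact h
      refine ⟨i, j, hji.symm, ?_⟩
      have hA := SA_sub d hji.symm
      have hB := SB_sub d hji.symm
      rw [hi, hj] at hA hB
      have eA : wA ((1:ZMod 3) - 1) - wA 1 = -2 := by decide
      have eA2 : wA ((1:ZMod 3) - 2) - wA 1 = -1 := by decide
      have eB : wB ((1:ZMod 3) - 1) - wB 1 = -1 := by decide
      have eB2 : wB ((1:ZMod 3) - 2) - wB 1 = 1 := by decide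
      rw [eA, eA2] at hA
      rw [eB, eB2] at hB
      -- SA(d') = SA d - 3, SB(d') = SB d, Nv d = SA d = 2 SB d
      have hNv : Nv d = SA d := by rw [Nv, max_eq_left (by linarith)]
      rw [Nv, hNv, hA, hB]
      exact max_le (by linarith) (by linarith)
  · by_cases h2 : ∃ j, d j = 2
    · -- only 2's present
      push_neg at h1
      obtain ⟨i, hi⟩ := h2
      have hval : ∀ l, d l = 0 ∨ d l = 2 := by
        intro l
        rcases eq_or_ne (d l) 2 with h | h
        · exact Or.inr h
        · exact Or.inl (zmod3_cases _ (h1 l) h)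
      have hAB : SB d = 2 * SA d := by
        rw [SA, SB, Finset.mul_sum]
        refine Finset.sum_congr rfl fun l _ => ?_
        rcases hval l with h | h <;> rw [h] <;> decide
      have h3A := dvd_SA d hs
      have hSA1 : 1 ≤ SA d := by
        have : wA (d i) ≤ SA d := Finset.single_le_sum (fun l _ => wA_nonneg _) (Finset.mem_univ i)
        rw [hi] at this
        exact le_trans (by decide) this
      have hSA3 : 3 ≤ SA d := Int.le_of_dvd (by linarith) h3A
      have hsum : ∑ l ∈ Finset.univ.erase i, wA (d l) ≠ 0 := by
        have htot : wA (d i) + ∑ l ∈ Finset.univ.erase i, wA (d l) = SA d :=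
          Finset.add_sum_erase Finset.univ (fun l => wA (d l)) (Finset.mem_univ i)
        rw [hi, (by decide : wA (2:ZMod 3) = 1)] at htot
        intro h0
        rw [h0] at htot
        linarith
      obtain ⟨j, hjmem, hj0⟩ := Finset.exists_ne_zero_of_sum_ne_zero hsum
      have hji : j ≠ i := (Finset.mem_erase.mp hjmem).1
      have hj : d j = 2 := by
        rcases hval j with h | h
        · exact absurd (by rw [h]; decide) hj0
        · exact h
      refine ⟨i, j, hji.symm, ?_⟩
      have hA := SA_sub d hji.symm
      have hB := SB_sub d hji.symm
      rw [hi, hj] at hA hB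
      have eA : wA ((2:ZMod 3) - 1) - wA 2 = 1 := by decide
      have eA2 : wA ((2:ZMod 3) - 2) - wA 2 = -1 := by decide
      have eB : wB ((2:ZMod 3) - 1) - wB 2 = -1 := by decide
      have eB2 : wB ((2:ZMod 3) - 2) - wB 2 = -2 := by decide
      rw [eA, eA2] at hA
      rw [eB, eB2] at hB
      have hNv : Nv d = SB d := by rw [Nv, max_eq_right (by linarith)]
      rw [Nv, hNv, hA, hB]
      exact max_le (by linarith) (by linarith)
    · -- all coordinates zero: contradiction
      push_neg at h1 h2
      exact absurd (funext fun l => zmod3_cases _ (h1 l) (h2 l)) hd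

lemma sum_xvec {i j : Fin m} (hij : i ≠ j) : ∑ l, xvec m i j l = 0 := by
  have : ∀ l : Fin m, xvec m i j l
      = (if l = i then (1 : ZMod 3) else 0) + (if l = j then (2 : ZMod 3) else 0) := by
    intro l
    rcases eq_or_ne l i with rfl | h
    · simp [xvec, if_neg hij]
    · simp [xvec, h]
  rw [Finset.sum_congr rfl fun l _ => this l, Finset.sum_add_distrib,
    Finset.sum_ite_eq' Finset.univ i (fun _ => (1:ZMod 3)),
    Finset.sum_ite_eq' Finset.univ j (fun _ => (2:ZMod 3))]
  rw [if_pos (Finset.mem_univ i), if_pos (Finset.mem_univ j)]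
  decide

lemma Nv_zero : Nv (0 : Fin m → ZMod 3) = 0 := by
  have hA : SA (0 : Fin m → ZMod 3) = 0 := by
    rw [SA]; exact Finset.sum_eq_zero fun l _ => by rw [Pi.zero_apply]; decide
  have hB : SB (0 : Fin m → ZMod 3) = 0 := by
    rw [SB]; exact Finset.sum_eq_zero fun l _ => by rw [Pi.zero_apply]; decide
  rw [Nv, hA, hB]; simp


lemma wA_eq_zero (t : ZMod 3) (h : wA t = 0) : t = 0 := by revert t h; decide

lemma exists_walk : ∀ (k : ℕ) (y z : GammaVert m), Nv (y.1 - z.1) ≤ 3 * (k:ℤ) →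
    ∃ W : (Gm m).Walk y z, W.length ≤ k := by
  intro k
  induction k with
  | zero =>
    intro y z h
    have h0 : Nv (y.1 - z.1) = 0 := le_antisymm (by simpa using h) (Nv_nonneg _)
    have hSA : SA (y.1 - z.1) = 0 :=
      le_antisymm (le_trans (le_max_left _ _) h0.le) (SA_nonneg _)
    have hall := (Finset.sum_eq_zero_iff_of_nonneg (fun l _ => wA_nonneg _)).mp hSA
    have hyz : y = z := by
      refine Subtype.ext (funext fun l => ?_)
      have h2 : (y.1 - z.1) l = 0 := wA_eq_zero _ (hall l (Finset.mem_univ l))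
      rw [Pi.sub_apply, sub_eq_zero] at h2
      exact h2
    subst hyz
    exact ⟨SimpleGraph.Walk.nil, le_refl _⟩
  | succ k ih =>
    intro y z h
    by_cases hyz : y = z
    · subst hyz; exact ⟨SimpleGraph.Walk.nil, by simp⟩
    · have hne : y.1 - z.1 ≠ 0 := sub_ne_zero.mpr fun he => hyz (Subtype.ext he)
      have hs : ∑ l, (y.1 - z.1) l = 0 := by
        simp only [Pi.sub_apply]
        rw [Finset.sum_sub_distrib, y.2, z.2, sub_zero]
      obtain ⟨i, j, hij, hstep⟩ := exists_step _ hne hs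
      have hsy' : ∑ l, (y.1 - xvec m i j) l = 0 := by
        simp only [Pi.sub_apply]
        rw [Finset.sum_sub_distrib, y.2, sum_xvec hij, sub_zero]
      set y' : GammaVert m := ⟨y.1 - xvec m i j, hsy'⟩ with hy'
      have hadj : (Gm m).Adj y y' := ⟨i, j, hij, by
        show y.1 - (y.1 - xvec m i j) = xvec m i j
        abel⟩
      have hd : y'.1 - z.1 = (y.1 - z.1) - xvec m i j := by
        show (y.1 - xvec m i j) - z.1 = (y.1 - z.1) - xvec m i j
        abel
      have hb : Nv (y'.1 - z.1) ≤ 3 * (k:ℤ) := by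
        rw [hd]
        push_cast at h
        linarith
      obtain ⟨W, hW⟩ := ih y' z hb
      exact ⟨SimpleGraph.Walk.cons hadj W, by rw [SimpleGraph.Walk.length_cons]; omega⟩

lemma walk_lb {u v : GammaVert m × Fin 3}
    (W : ((Gm m).boxProd (⊤ : SimpleGraph (Fin 3))).Walk u v) :
    Nv (u.1.1 - v.1.1) + (if u.2 = v.2 then 0 else 3) ≤ 3 * (W.length : ℤ) := by
  induction W with
  | nil =>
    rw [sub_self, Nv_zero, if_pos rfl]
    simp
  | @cons a b c h W ih =>
    rcases SimpleGraph.boxProd_adj.mp h with ⟨hg, he⟩ | ⟨he, hg⟩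
    · obtain ⟨i, j, hij, hx⟩ := hg
      have key : (a.1.1 - c.1.1) - xvec m i j = b.1.1 - c.1.1 := by
        rw [← hx]; abel
      have hstep := Nv_step_lb (a.1.1 - c.1.1) hij
      rw [key] at hstep
      rw [SimpleGraph.Walk.length_cons, he]
      push_cast
      linarith
    · rw [SimpleGraph.Walk.length_cons, hg]
      push_cast
      push_cast at ih
      split_ifs with h1 h2 h2 <;> split_ifs at ih <;> linarith

lemma SA_const_one : SA (fun _ : Fin m => (1:ZMod 3)) = 2 * m := by
  rw [SA]
  calc ∑ _l : Fin m, wA (1:ZMod 3) = ∑ _l : Fin m, (2:ℤ) :=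
        Finset.sum_congr rfl fun l _ => by decide
    _ = 2 * m := by simp [mul_comm]

lemma SB_const_one : SB (fun _ : Fin m => (1:ZMod 3)) = m := by
  rw [SB]
  calc ∑ _l : Fin m, wB (1:ZMod 3) = ∑ _l : Fin m, (1:ℤ) :=
        Finset.sum_congr rfl fun l _ => by decide
    _ = m := by simp

lemma SA_const_two : SA (fun _ : Fin m => (2:ZMod 3)) = m := by
  rw [SA]
  calc ∑ _l : Fin m, wA (2:ZMod 3) = ∑ _l : Fin m, (1:ℤ) :=
        Finset.sum_congr rfl fun l _ => by decide
    _ = m := by simp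

lemma SB_const_two : SB (fun _ : Fin m => (2:ZMod 3)) = 2 * m := by
  rw [SB]
  calc ∑ _l : Fin m, wB (2:ZMod 3) = ∑ _l : Fin m, (2:ℤ) :=
        Finset.sum_congr rfl fun l _ => by decide
    _ = 2 * m := by simp [mul_comm]

lemma Nv_const {c : ZMod 3} (hc : c ≠ 0) : Nv (fun _ : Fin m => c) = 2 * m := by
  have hm : (0:ℤ) ≤ m := Int.natCast_nonneg m
  have hc2 : c = 1 ∨ c = 2 := by revert c hc; decide
  rcases hc2 with rfl | rfl
  · rw [Nv, SA_const_one, SB_const_one, max_eq_left (by linarith)]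
  · rw [Nv, SA_const_two, SB_const_two, max_eq_right (by linarith)]

lemma wA_eq_two (t : ZMod 3) (h : wA t = 2) : t = 1 := by revert t h; decide
lemma wB_eq_two (t : ZMod 3) (h : wB t = 2) : t = 2 := by revert t h; decide

lemma eq_const_of_Nv (d : Fin m → ZMod 3) (h : Nv d = 2 * m) :
    ∃ c : ZMod 3, c ≠ 0 ∧ d = fun _ => c := by
  rcases max_choice (SA d) (SB d) with h' | h'
  · rw [Nv, h'] at h
    refine ⟨1, by decide, funext fun l => ?_⟩
    have hz : ∑ l, ((2:ℤ) - wA (d l)) = 0 := by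
      rw [Finset.sum_sub_distrib]
      have : ∑ _l : Fin m, (2:ℤ) = 2 * m := by simp [mul_comm]
      rw [this, ← SA, h, sub_self]
    have h2 := (Finset.sum_eq_zero_iff_of_nonneg
      (fun l _ => by linarith [wA_le (d l)])).mp hz l (Finset.mem_univ l)
    exact wA_eq_two _ (by linarith)
  · rw [Nv, h'] at h
    refine ⟨2, by decide, funext fun l => ?_⟩
    have hz : ∑ l, ((2:ℤ) - wB (d l)) = 0 := by
      rw [Finset.sum_sub_distrib]
      have : ∑ _l : Fin m, (2:ℤ) = 2 * m := by simp [mul_comm]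
      rw [this, ← SB, h, sub_self]
    have h2 := (Finset.sum_eq_zero_iff_of_nonneg
      (fun l _ => by linarith [wB_le (d l)])).mp hz l (Finset.mem_univ l)
    exact wB_eq_two _ (by linarith)


lemma power_adj (n : ℕ) (hn : 1 ≤ n) (u v : GammaVert (3*n) × Fin 3) :
    (((Gm (3*n)).boxProd (⊤ : SimpleGraph (Fin 3))).power (2*n)).Adj u v ↔
      u ≠ v ∧ ¬((∃ c : ZMod 3, c ≠ 0 ∧ u.1.1 - v.1.1 = fun _ => c) ∧ u.2 ≠ v.2) := by
  constructor
  · rintro ⟨hne, hreach, hdist⟩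
    refine ⟨hne, ?_⟩
    rintro ⟨⟨c, hc, hconst⟩, hab⟩
    obtain ⟨W, hW⟩ := hreach.exists_walk_length_eq_dist
    have hlb := walk_lb W
    rw [hconst, Nv_const hc, if_neg hab, hW] at hlb
    have hd : ((((Gm (3*n)).boxProd (⊤ : SimpleGraph (Fin 3))).dist u v : ℕ) : ℤ) ≤ 2*(n:ℤ) := by
      exact_mod_cast hdist
    push_cast at hlb
    linarith
  · rintro ⟨hne, hfar⟩
    refine ⟨hne, ?_⟩
    by_cases hab : u.2 = v.2
    · have hNle : Nv (u.1.1 - v.1.1) ≤ 3 * ((2*n : ℕ):ℤ) := by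
        have h1 := Nv_le (u.1.1 - v.1.1)
        push_cast at h1 ⊢
        linarith
      obtain ⟨W, hW⟩ := exists_walk (2*n) u.1 v.1 hNle
      have hv : (v.1, u.2) = v := by rw [hab]
      have hlen : (((W.boxProdLeft (⊤ : SimpleGraph (Fin 3)) u.2)).copy rfl hv).length ≤ 2*n := by
        rw [SimpleGraph.Walk.length_copy]
        calc (W.boxProdLeft (⊤ : SimpleGraph (Fin 3)) u.2).length = W.length :=
              SimpleGraph.Walk.length_map _ W
          _ ≤ 2*n := hW
      exact ⟨⟨(W.boxProdLeft (⊤ : SimpleGraph (Fin 3)) u.2).copy rfl hv⟩,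
        le_trans (SimpleGraph.dist_le _) hlen⟩
    · have hsum : ∑ l, (u.1.1 - v.1.1) l = 0 := by
        simp only [Pi.sub_apply]
        rw [Finset.sum_sub_distrib, u.1.2, v.1.2, sub_zero]
      have h3 := dvd_Nv _ hsum
      have hle := Nv_le (u.1.1 - v.1.1)
      have hne6 : Nv (u.1.1 - v.1.1) ≠ 2 * ((3*n : ℕ):ℤ) := by
        intro h
        obtain ⟨c, hc, hcc⟩ := eq_const_of_Nv _ (by exact_mod_cast h)
        exact hfar ⟨⟨c, hc, hcc⟩, hab⟩
      have hNle : Nv (u.1.1 - v.1.1) ≤ 3 * ((2*n - 1 : ℕ):ℤ) := by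
        push_cast at hle hne6
        omega
      obtain ⟨W, hW⟩ := exists_walk (2*n-1) u.1 v.1 hNle
      have hadj : ((Gm (3*n)).boxProd (⊤ : SimpleGraph (Fin 3))).Adj (v.1, u.2) (v.1, v.2) := by
        refine SimpleGraph.boxProd_adj.mpr (Or.inr ⟨?_, rfl⟩)
        simpa using hab
      have hlen : ((W.boxProdLeft (⊤ : SimpleGraph (Fin 3)) u.2).concat hadj).length ≤ 2*n := by
        rw [SimpleGraph.Walk.length_concat]
        have h5 : (W.boxProdLeft (⊤ : SimpleGraph (Fin 3)) u.2).length = W.length :=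
          SimpleGraph.Walk.length_map _ W
        omega
      exact ⟨⟨(W.boxProdLeft (⊤ : SimpleGraph (Fin 3)) u.2).concat hadj⟩,
        le_trans (SimpleGraph.dist_le _) hlen⟩


def ZeroSum (k : ℕ) : Type := {w : Fin k → ZMod 3 // ∑ i, w i = 0}

def Blk (m : ℕ) : Type :=
  {z : Fin m → ZMod 3 // (∑ i, z i = 0) ∧ ∀ i : Fin m, (i : ℕ) = 0 → z i = 0}

instance : Fintype (ZeroSum k) := by unfold ZeroSum; infer_instance
instance : Fintype (Blk k) := by unfold Blk; infer_instance
instance : Fintype (GammaVert k) := by unfold GammaVert; infer_instance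

def zeroSumEquiv (k : ℕ) : ZeroSum (k+1) ≃ (Fin k → ZMod 3) where
  toFun w := fun i => w.1 i.castSucc
  invFun f := ⟨Fin.snoc f (- ∑ i, f i), by
    rw [Fin.sum_univ_castSucc]
    simp⟩
  left_inv w := by
    refine Subtype.ext (funext fun i => ?_)
    refine Fin.lastCases ?_ (fun i => ?_) i
    · show Fin.snoc (α := fun _ => ZMod 3) (fun i : Fin k => w.1 i.castSucc) (- ∑ i : Fin k, w.1 i.castSucc) (Fin.last k) = w.1 (Fin.last k)
      rw [Fin.snoc_last]
      have h2 := w.2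
      rw [Fin.sum_univ_castSucc] at h2
      exact (eq_neg_of_add_eq_zero_right h2).symm
    · show Fin.snoc (α := fun _ => ZMod 3) (fun i : Fin k => w.1 i.castSucc) (- ∑ i : Fin k, w.1 i.castSucc) i.castSucc = w.1 i.castSucc
      rw [Fin.snoc_castSucc]
  right_inv f := funext fun i => by
    show Fin.snoc (α := fun _ => ZMod 3) f (- ∑ i : Fin k, f i) i.castSucc = f i
    rw [Fin.snoc_castSucc]

def blkEquiv (k : ℕ) : Blk (k+1) ≃ ZeroSum k where
  toFun z := ⟨fun i => z.1 i.succ, by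
    have h2 := z.2.1
    rw [Fin.sum_univ_succ, z.2.2 0 rfl, zero_add] at h2
    exact h2⟩
  invFun w := ⟨Fin.cons 0 w.1, by
    refine ⟨?_, ?_⟩
    · rw [Fin.sum_univ_succ]
      simp [w.2]
    · intro i hi
      have h0 : i = 0 := Fin.ext hi
      subst h0
      exact Fin.cons_zero _ _⟩
  left_inv z := by
    refine Subtype.ext (funext fun i => ?_)
    refine Fin.cases ?_ (fun i => ?_) i
    · show Fin.cons (α := fun _ => ZMod 3) (0 : ZMod 3) (fun i : Fin k => z.1 i.succ) 0 = z.1 0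
      rw [Fin.cons_zero]; exact (z.2.2 0 rfl).symm
    · show Fin.cons (α := fun _ => ZMod 3) (0 : ZMod 3) (fun i : Fin k => z.1 i.succ) i.succ = z.1 i.succ
      rw [Fin.cons_succ]
  right_inv w := Subtype.ext (funext fun i => by
    show Fin.cons (α := fun _ => ZMod 3) (0 : ZMod 3) w.1 i.succ = w.1 i
    rw [Fin.cons_succ])

lemma card_blk (k : ℕ) : Fintype.card (Blk (k+2)) = 3 ^ k := by
  rw [Fintype.card_congr ((blkEquiv (k+1)).trans (zeroSumEquiv k))]
  simp

noncomputable def blkFin (k : ℕ) : Blk (k+2) ≃ Fin (3 ^ k) := Fintype.equivFinOfCardEq (card_blk k)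

lemma sum_const_zmod (m : ℕ) (hm3 : (m : ZMod 3) = 0) (c : ZMod 3) :
    ∑ _l : Fin m, c = 0 := by
  rw [Finset.sum_const, Finset.card_univ, Fintype.card_fin, nsmul_eq_mul, hm3, zero_mul]

def gammaEquiv (m : ℕ) (hm : 0 < m) (hm3 : (m : ZMod 3) = 0) :
    GammaVert m ≃ Blk m × ZMod 3 where
  toFun y := (⟨y.1 - fun _ => y.1 ⟨0, hm⟩, by
      refine ⟨?_, ?_⟩
      · simp only [Pi.sub_apply]
        rw [Finset.sum_sub_distrib, y.2, sum_const_zmod m hm3, sub_zero]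
      · intro i hi
        have h0 : i = ⟨0, hm⟩ := Fin.ext hi
        subst h0
        simp⟩, y.1 ⟨0, hm⟩)
  invFun p := ⟨p.1.1 + fun _ => p.2, by
    simp only [Pi.add_apply]
    rw [Finset.sum_add_distrib, p.1.2.1, sum_const_zmod m hm3, add_zero]⟩
  left_inv y := by
    refine Subtype.ext (funext fun l => ?_)
    show (y.1 l - y.1 ⟨0, hm⟩) + y.1 ⟨0, hm⟩ = y.1 l
    ring
  right_inv p := by
    have hz : p.1.1 ⟨0, hm⟩ = 0 := p.1.2.2 ⟨0, hm⟩ rfl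
    have h0 : ((p.1.1 + (fun _ => p.2) : Fin m → ZMod 3)) ⟨0, hm⟩ = p.2 := by
      show p.1.1 ⟨0, hm⟩ + p.2 = p.2
      rw [hz, zero_add]
    refine Prod.ext (Subtype.ext ?_) ?_
    · show (p.1.1 + (fun _ => p.2) : Fin m → ZMod 3) - (fun _ => (p.1.1 + (fun _ => p.2) : Fin m → ZMod 3) ⟨0, hm⟩) = p.1.1
      simp only [h0]
      funext l
      show (p.1.1 l + p.2) - p.2 = p.1.1 l
      ring
    · exact h0

lemma gamma_far (m : ℕ) (hm : 0 < m) (hm3 : (m : ZMod 3) = 0) (y z : GammaVert m) :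
    ((gammaEquiv m hm hm3 y).1 = (gammaEquiv m hm hm3 z).1 ∧
      (gammaEquiv m hm hm3 y).2 ≠ (gammaEquiv m hm hm3 z).2) ↔
    (∃ c : ZMod 3, c ≠ 0 ∧ y.1 - z.1 = fun _ => c) := by
  constructor
  · rintro ⟨hB, hC⟩
    have hC' : y.1 ⟨0, hm⟩ ≠ z.1 ⟨0, hm⟩ := hC
    refine ⟨y.1 ⟨0, hm⟩ - z.1 ⟨0, hm⟩, sub_ne_zero.mpr hC', ?_⟩
    have hB' : y.1 - (fun _ => y.1 ⟨0, hm⟩) = z.1 - (fun _ => z.1 ⟨0, hm⟩) :=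
      congrArg Subtype.val hB
    funext l
    have h1 := congrFun hB' l
    simp only [Pi.sub_apply] at h1 ⊢
    linear_combination h1
  · rintro ⟨c, hc, hd⟩
    have hC : y.1 ⟨0, hm⟩ - z.1 ⟨0, hm⟩ = c := by
      have h1 := congrFun hd ⟨0, hm⟩
      simpa using h1
    constructor
    · refine Subtype.ext (funext fun l => ?_)
      show y.1 l - y.1 ⟨0, hm⟩ = z.1 l - z.1 ⟨0, hm⟩
      have h1 := congrFun hd l
      simp only [Pi.sub_apply] at h1
      linear_combination h1 - hC
    · show y.1 ⟨0, hm⟩ ≠ z.1 ⟨0, hm⟩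
      intro h
      rw [h, sub_self] at hC
      exact hc hC.symm

end PIL

/-- Let `n ≥ 2` and `H_{3n} = G_{3n} □ K_3`. Then `H_{3n}^(2n)` is isomorphic to the
lexicographic product `K_{3^(3n-2)}[K_3 □ K_3]`. -/
theorem power_iso_lexProd (n : ℕ) (hn : 2 ≤ n) :
    Nonempty
      ((((Gm (3 * n)).boxProd (⊤ : SimpleGraph (Fin 3))).power (2 * n)) ≃g
        SimpleGraph.lexProd (⊤ : SimpleGraph (Fin (3 ^ (3 * n - 2))))
          ((⊤ : SimpleGraph (Fin 3)).boxProd (⊤ : SimpleGraph (Fin 3)))) := by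
  classical
  have hn1 : 1 ≤ n := by omega
  have hm : 0 < 3 * n := by omega
  have hm3 : ((3 * n : ℕ) : ZMod 3) = 0 := by
    rw [Nat.cast_mul]
    have h3 : ((3:ℕ) : ZMod 3) = 0 := by decide
    rw [h3, zero_mul]
  let e1 := PIL.gammaEquiv (3 * n) hm hm3
  have hk : 3 * n - 2 + 2 = 3 * n := by omega
  let eB : PIL.Blk (3 * n) ≃ Fin (3 ^ (3 * n - 2)) :=
    (Equiv.cast (congrArg PIL.Blk hk.symm)).trans (PIL.blkFin (3 * n - 2))
  let eZ : ZMod 3 ≃ Fin 3 := Equiv.refl (Fin 3)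
  let e : GammaVert (3 * n) × Fin 3 ≃ Fin (3 ^ (3 * n - 2)) × (Fin 3 × Fin 3) :=
    { toFun := fun u => (eB (e1 u.1).1, (eZ (e1 u.1).2, u.2))
      invFun := fun p => (e1.symm (eB.symm p.1, eZ.symm p.2.1), p.2.2)
      left_inv := fun u => by simp
      right_inv := fun p => by simp }
  refine ⟨{ toEquiv := e, map_rel_iff' := ?_ }⟩
  intro u v
  rw [PIL.power_adj n hn1 u v]
  have hL : (SimpleGraph.lexProd (⊤ : SimpleGraph (Fin (3 ^ (3 * n - 2))))
      ((⊤ : SimpleGraph (Fin 3)).boxProd (⊤ : SimpleGraph (Fin 3)))).Adj (e u) (e v) ↔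
      ((⊤ : SimpleGraph (Fin (3 ^ (3 * n - 2)))).Adj (e u).1 (e v).1 ∨
        ((e u).1 = (e v).1 ∧
          (((⊤ : SimpleGraph (Fin 3)).boxProd (⊤ : SimpleGraph (Fin 3))).Adj (e u).2 (e v).2))) :=
    Iff.rfl
  rw [hL]
  have hA : (e u).1 = eB (e1 u.1).1 := rfl
  have hA' : (e v).1 = eB (e1 v.1).1 := rfl
  have hC : (e u).2 = (eZ (e1 u.1).2, u.2) := rfl
  have hC' : (e v).2 = (eZ (e1 v.1).2, v.2) := rfl
  rw [hA, hA', hC, hC']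
  simp only [SimpleGraph.top_adj, SimpleGraph.boxProd_adj]
  have hBiff : eB (e1 u.1).1 = eB (e1 v.1).1 ↔ (e1 u.1).1 = (e1 v.1).1 :=
    eB.apply_eq_iff_eq
  have hZiff : eZ (e1 u.1).2 = eZ (e1 v.1).2 ↔ (e1 u.1).2 = (e1 v.1).2 :=
    eZ.apply_eq_iff_eq
  have hPQ : (e1 u.1).1 = (e1 v.1).1 ∧ (e1 u.1).2 = (e1 v.1).2 ↔ u.1 = v.1 := by
    rw [← Prod.ext_iff]
    exact e1.apply_eq_iff_eq
  have hFar := PIL.gamma_far (3 * n) hm hm3 u.1 v.1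
  have hUV : u = v ↔ u.1 = v.1 ∧ u.2 = v.2 := Prod.ext_iff
  simp only [ne_eq, hBiff, hZiff]
  constructor
  · rintro (h | ⟨hP, (⟨hQ, hR⟩ | ⟨hR, hQ⟩)⟩)
    · refine ⟨fun huv => h (hPQ.mpr (hUV.mp huv).1).1,
        fun hf => h (hFar.mpr hf.1).1⟩
    · exact ⟨fun huv => hQ (hPQ.mpr (hUV.mp huv).1).2,
        fun hf => hf.2 hR⟩
    · exact ⟨fun huv => hR (hUV.mp huv).2,
        fun hf => (hFar.mpr hf.1).2 hQ⟩
  · rintro ⟨hne, hnf⟩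
    by_cases hP : (e1 u.1).1 = (e1 v.1).1
    · by_cases hQ : (e1 u.1).2 = (e1 v.1).2
      · have h1 : u.1 = v.1 := hPQ.mp ⟨hP, hQ⟩
        have hR : ¬ u.2 = v.2 := fun hr => hne (hUV.mpr ⟨h1, hr⟩)
        exact Or.inr ⟨hP, Or.inr ⟨hR, hQ⟩⟩
      · by_cases hR : u.2 = v.2
        · exact Or.inr ⟨hP, Or.inl ⟨hQ, hR⟩⟩
        · exact absurd ⟨hFar.mp ⟨hP, hQ⟩, hR⟩ hnf
    · exact Or.inl hP
end

section
/- For every positive integer n, the list chromatic number of the lexicographic product H = K_{3^{3n−2}}[K_3 □ K_3] of the complete graph on 3^{3n−2} vertices with K_3 □ K_3 satisfies χ_l(H) ≥ (10/9)·3^{3n−1} − 1. -/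
open SimpleGraph

/-! ### Auxiliary lemmas for the lower bound -/

/-- Adjacency in the lexicographic product, definitionally. -/
lemma SimpleGraph.lexProd_adj {V W : Type*} (G : SimpleGraph V) (H : SimpleGraph W)
    (a b : V × W) :
    (G.lexProd H).Adj a b ↔ G.Adj a.1 b.1 ∨ (a.1 = b.1 ∧ H.Adj a.2 b.2) := Iff.rfl

/-- The number of naturals below `3*K` with residue `r < 3` modulo `3` is `K`. -/
lemma card_filter_mod (K r : ℕ) (hr : r < 3) :
    ((Finset.range (3 * K)).filter (fun c => c % 3 = r)).card = K := by
  have h : (Finset.range (3 * K)).filter (fun c => c % 3 = r)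
      = (Finset.range K).image (fun i => 3 * i + r) := by
    ext c
    simp only [Finset.mem_filter, Finset.mem_range, Finset.mem_image]
    constructor
    · rintro ⟨h1, h2⟩
      exact ⟨c / 3, by omega, by omega⟩
    · rintro ⟨i, hi, rfl⟩
      omega
  rw [h, Finset.card_image_of_injective _ (fun a b hab => by omega), Finset.card_range]

/-- Any graph is choosable from lists of size at least the number of vertices. -/
lemma choosable_of_card_le {V : Type*} [Fintype V] (G : SimpleGraph V)
    (L : V → Finset ℕ) (h : ∀ v, Fintype.card V ≤ (L v).card) : G.Choosable L := by
  have hall : ∀ s : Finset V, s.card ≤ (s.biUnion L).card := by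
    intro s
    rcases s.eq_empty_or_nonempty with rfl | ⟨v, hv⟩
    · simp
    · calc s.card ≤ (Finset.univ : Finset V).card := Finset.card_le_univ s
        _ = Fintype.card V := Finset.card_univ
        _ ≤ (L v).card := h v
        _ ≤ (s.biUnion L).card :=
          Finset.card_le_card (Finset.subset_biUnion_of_mem L hv)
  obtain ⟨f, hinj, hf⟩ := (Finset.all_card_le_biUnion_card_iff_exists_injective L).1 hall
  exact ⟨f, hf, fun u v huv he => G.ne_of_adj huv (hinj he)⟩

/-- The key construction: the lists `L (v,(a,b)) = {c < 3K : c % 3 ≠ b}` (all of size `2K`)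
admit no proper coloring of `K_M [K_3 □ K_3]` as soon as `3K < 5M`.  Indeed a color
`c ≡ j (mod 3)` is usable only on cells whose second coordinate differs from `j`, i.e. in
two of the three column-cliques; hence each color class inside one copy has at most two
vertices, so each copy uses at least `5` colors, and distinct copies use disjoint colors. -/
lemma not_choosable_main (M K : ℕ) (hMK : 3 * K < 5 * M) :
    ¬ (SimpleGraph.lexProd (⊤ : SimpleGraph (Fin M))
        ((⊤ : SimpleGraph (Fin 3)).boxProd (⊤ : SimpleGraph (Fin 3)))).Choosable
      (fun x => (Finset.range (3 * K)).filter (fun c => ¬ c % 3 = (x.2.2 : ℕ))) := by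
  rintro ⟨φ, hmem, hproper⟩
  set G := SimpleGraph.lexProd (⊤ : SimpleGraph (Fin M))
      ((⊤ : SimpleGraph (Fin 3)).boxProd (⊤ : SimpleGraph (Fin 3))) with hG
  -- the palette of each copy
  set S : Fin M → Finset ℕ :=
    fun v => (Finset.univ : Finset (Fin 3 × Fin 3)).image (fun p => φ (v, p)) with hS
  -- vertices in different copies are adjacent
  have hadj_cross : ∀ (v v' : Fin M) (p p' : Fin 3 × Fin 3), v ≠ v' →
      G.Adj (v, p) (v', p') := by
    intro v v' p p' hvv'
    exact Or.inl ((SimpleGraph.top_adj v v').2 hvv')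
  -- two distinct cells of one copy with the same color have distinct second coordinates
  have hcol : ∀ (v : Fin M) (p p' : Fin 3 × Fin 3), p ≠ p' →
      φ (v, p) = φ (v, p') → p.2 ≠ p'.2 := by
    intro v p p' hne heq h2
    have h1 : p.1 ≠ p'.1 := fun h1 => hne (Prod.ext_iff.2 ⟨h1, h2⟩)
    have hadj : G.Adj (v, p) (v, p') :=
      Or.inr ⟨rfl, (SimpleGraph.boxProd_adj).2 (Or.inl ⟨(SimpleGraph.top_adj _ _).2 h1, h2⟩)⟩
    exact hproper _ _ hadj heq
  -- each color class inside a copy has at most two cells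
  have hfiber : ∀ (v : Fin M) (c : ℕ),
      ((Finset.univ : Finset (Fin 3 × Fin 3)).filter (fun p => φ (v, p) = c)).card ≤ 2 := by
    intro v c
    by_contra hcon
    push_neg at hcon
    rw [Finset.two_lt_card] at hcon
    obtain ⟨p1, hp1, p2, hp2, p3, hp3, h12, h13, h23⟩ := hcon
    simp only [Finset.mem_filter, Finset.mem_univ, true_and] at hp1 hp2 hp3
    have hm1 := hmem (v, p1)
    have hm2 := hmem (v, p2)
    have hm3 := hmem (v, p3)
    rw [hp1, Finset.mem_filter] at hm1
    rw [hp2, Finset.mem_filter] at hm2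
    rw [hp3, Finset.mem_filter] at hm3
    have n12 : p1.2 ≠ p2.2 := hcol v p1 p2 h12 (hp1.trans hp2.symm)
    have n13 : p1.2 ≠ p3.2 := hcol v p1 p3 h13 (hp1.trans hp3.symm)
    have n23 : p2.2 ≠ p3.2 := hcol v p2 p3 h23 (hp2.trans hp3.symm)
    have e12 : (p1.2 : ℕ) ≠ (p2.2 : ℕ) := fun h => n12 (Fin.ext h)
    have e13 : (p1.2 : ℕ) ≠ (p3.2 : ℕ) := fun h => n13 (Fin.ext h)
    have e23 : (p2.2 : ℕ) ≠ (p3.2 : ℕ) := fun h => n23 (Fin.ext h)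
    have b1 : (p1.2 : ℕ) < 3 := p1.2.isLt
    have b2 : (p2.2 : ℕ) < 3 := p2.2.isLt
    have b3 : (p3.2 : ℕ) < 3 := p3.2.isLt
    have hc1 : ¬ c % 3 = (p1.2 : ℕ) := hm1.2
    have hc2 : ¬ c % 3 = (p2.2 : ℕ) := hm2.2
    have hc3 : ¬ c % 3 = (p3.2 : ℕ) := hm3.2
    have hcm : c % 3 < 3 := Nat.mod_lt _ (by norm_num)
    omega
  -- hence each copy uses at least 5 colors
  have hcard5 : ∀ v : Fin M, 5 ≤ (S v).card := by
    intro v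
    have h9 : (Finset.univ : Finset (Fin 3 × Fin 3)).card = 9 := by decide
    have hsum := Finset.card_eq_sum_card_image (fun p => φ (v, p))
      (Finset.univ : Finset (Fin 3 × Fin 3))
    have hle : ((Finset.univ : Finset (Fin 3 × Fin 3)).card : ℕ)
        ≤ (Finset.image (fun p => φ (v, p)) Finset.univ).card • 2 := by
      rw [hsum]
      exact Finset.sum_le_card_nsmul _ _ 2 (fun a _ => hfiber v a)
    rw [h9, smul_eq_mul] at hle
    have h5 : 5 ≤ (Finset.image (fun p => φ (v, p)) Finset.univ).card := by omega
    exact h5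
  -- palettes of distinct copies are disjoint
  have hdisj : ∀ v ∈ (Finset.univ : Finset (Fin M)), ∀ v' ∈ (Finset.univ : Finset (Fin M)),
      v ≠ v' → Disjoint (S v) (S v') := by
    intro v _ v' _ hvv'
    rw [Finset.disjoint_left]
    rintro c hc hc'
    rw [hS] at hc hc'
    simp only [Finset.mem_image, Finset.mem_univ, true_and] at hc hc'
    obtain ⟨p, hp⟩ := hc
    obtain ⟨p', hp'⟩ := hc'
    exact hproper _ _ (hadj_cross v v' p p' hvv') (hp.trans hp'.symm)
  -- all colors lie below `3K`
  have hsub : (Finset.univ : Finset (Fin M)).biUnion S ⊆ Finset.range (3 * K) := by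
    intro c hc
    rw [Finset.mem_biUnion] at hc
    obtain ⟨v, _, hc⟩ := hc
    rw [hS] at hc
    simp only [Finset.mem_image, Finset.mem_univ, true_and] at hc
    obtain ⟨p, hp⟩ := hc
    have := hmem (v, p)
    rw [hp, Finset.mem_filter] at this
    exact this.1
  -- counting
  have h1 : ((Finset.univ : Finset (Fin M)).biUnion S).card = ∑ v, (S v).card :=
    Finset.card_biUnion hdisj
  have h3 : ((Finset.univ : Finset (Fin M)).biUnion S).card ≤ 3 * K := by
    calc ((Finset.univ : Finset (Fin M)).biUnion S).card
        ≤ (Finset.range (3 * K)).card := Finset.card_le_card hsub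
      _ = 3 * K := Finset.card_range _
  have h4 : 5 * M ≤ ∑ v, (S v).card := by
    calc 5 * M = ∑ _v : Fin M, 5 := by
          rw [Finset.sum_const, Finset.card_univ, Fintype.card_fin, smul_eq_mul, mul_comm]
      _ ≤ ∑ v, (S v).card := Finset.sum_le_sum (fun v _ => hcard5 v)
  omega

/-- For every positive integer `n`, the list chromatic number of
`K_{3^(3n-2)}[K_3 □ K_3]` is at least `(10/9)·3^(3n-1) - 1 = 10·3^(3n-3) - 1`. -/
theorem listChromaticNumber_lexProd_lower (n : ℕ) (hn : 1 ≤ n) :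
    10 * 3 ^ (3 * n - 3) - 1 ≤
      (SimpleGraph.lexProd (⊤ : SimpleGraph (Fin (3 ^ (3 * n - 2))))
        ((⊤ : SimpleGraph (Fin 3)).boxProd (⊤ : SimpleGraph (Fin 3)))).listChromaticNumber := by
  have hq : 0 < 3 ^ (3 * n - 3) := pow_pos (by norm_num) _
  have hM : 3 ^ (3 * n - 2) = 3 * 3 ^ (3 * n - 3) := by
    have he : 3 * n - 2 = (3 * n - 3) + 1 := by omega
    rw [he, pow_succ, mul_comm]
  unfold SimpleGraph.listChromaticNumber
  refine le_csInf ⟨Fintype.card (Fin (3 ^ (3 * n - 2)) × (Fin 3 × Fin 3)), ?_⟩ ?_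
  · intro L hL
    exact choosable_of_card_le _ L hL
  · intro b hb
    by_contra hlt
    push_neg at hlt
    set q := 3 ^ (3 * n - 3) with hqdef
    set K := 5 * q - 1 with hK
    have hb' : ∀ L : Fin (3 ^ (3 * n - 2)) × (Fin 3 × Fin 3) → Finset ℕ,
        (∀ v, b ≤ (L v).card) →
        (SimpleGraph.lexProd (⊤ : SimpleGraph (Fin (3 ^ (3 * n - 2))))
          ((⊤ : SimpleGraph (Fin 3)).boxProd (⊤ : SimpleGraph (Fin 3)))).Choosable L := hb
    have hcard : ∀ x : Fin (3 ^ (3 * n - 2)) × (Fin 3 × Fin 3),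
        b ≤ ((Finset.range (3 * K)).filter (fun c => ¬ c % 3 = (x.2.2 : ℕ))).card := by
      intro x
      have hmodlt : ((x.2.2 : ℕ)) < 3 := x.2.2.isLt
      have h1 := card_filter_mod K (x.2.2 : ℕ) hmodlt
      have h3 : (Finset.range (3 * K)).filter (fun c => ¬ c % 3 = (x.2.2 : ℕ))
          = Finset.range (3 * K) \ (Finset.range (3 * K)).filter (fun c => c % 3 = (x.2.2 : ℕ)) :=
        Finset.filter_not _ _
      rw [h3, Finset.card_sdiff_of_subset (Finset.filter_subset _ _), Finset.card_range, h1]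
      omega
    exact not_choosable_main (3 ^ (3 * n - 2)) K (by omega) (hb' _ hcard)
end

section
/- Let n ≥ 2 be an integer, let H_{3n} = G_{3n} □ K_3, and let P_1, …, P_{3^{3n−2}} be the equivalence classes of the relation ∼ on Γ_{3n} (y ∼ z iff y − z ∈ {0, (1,…,1), (2,…,2)}), and set Q_i = P_i × V(K_3). Then for any vertex x ∈ Q_i and y ∈ Q_j with i ≠ j, the distance in H_{3n} satisfies d_{H_{3n}}(x, y) ≤ 2n. -/
open SimpleGraph

private def cnt {m : ℕ} (d : Fin m → ZMod 3) (c : ZMod 3) : ℕ :=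
  (Finset.univ.filter fun l => d l = c).card

private lemma zmod3_cases : ∀ z : ZMod 3, z = 0 ∨ z = 1 ∨ z = 2 := by decide

private lemma sum_xvec {m : ℕ} (i j : Fin m) (hij : i ≠ j) : ∑ l, xvec m i j l = 0 := by
  have key : ∀ l, xvec m i j l = (if i = l then (1 : ZMod 3) else 0) + (if j = l then 2 else 0) := by
    intro l
    unfold xvec
    by_cases h1 : l = i
    · subst h1
      rw [if_pos rfl, if_pos rfl, if_neg (show ¬j = l from fun h => hij h.symm)]
      exact (add_zero 1).symm
    · by_cases h2 : l = j
      · subst h2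
        rw [if_neg h1, if_pos rfl, if_neg (show ¬i = l from fun h => h1 h.symm), zero_add]
      · rw [if_neg h1, if_neg h2, if_neg (show ¬i = l from fun h => h1 h.symm),
          if_neg (show ¬j = l from fun h => h2 h.symm), add_zero]
  simp only [key, Finset.sum_add_distrib, Finset.sum_ite_eq, Finset.mem_univ, if_true]
  decide

private lemma neighbor {m : ℕ} (u : GammaVert m) (i j : Fin m) (hij : i ≠ j) :
    ∃ u' : GammaVert m, (Gm m).Adj u u' ∧ u'.1 = u.1 - xvec m i j := by
  refine ⟨⟨u.1 - xvec m i j, ?_⟩, ⟨i, j, hij, ?_⟩, rfl⟩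
  · have : ∑ l, (u.1 - xvec m i j) l = ∑ l, u.1 l - ∑ l, xvec m i j l := by
      simp [Pi.sub_apply, Finset.sum_sub_distrib]
    rw [this, u.2, sum_xvec i j hij, sub_zero]
  · show u.1 - (u.1 - xvec m i j) = xvec m i j
    exact sub_sub_cancel _ _

private lemma count_step {m : ℕ} (d : Fin m → ZMod 3) (i j : Fin m) (hij : i ≠ j) (c : ZMod 3) :
    cnt (fun l => d l - xvec m i j l) c + (if d i = c then 1 else 0) + (if d j = c then 1 else 0)
      = cnt d c + (if d i - 1 = c then 1 else 0) + (if d j + 1 = c then 1 else 0) := by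
  classical
  set s : Finset (Fin m) := (Finset.univ.erase i).erase j with hs
  have hjs : j ∉ s := Finset.notMem_erase _ _
  have his : i ∉ insert j s := by
    simp only [Finset.mem_insert, hs]
    rintro (h | h)
    · exact hij h
    · exact Finset.notMem_erase i _ (Finset.mem_of_mem_erase h)
  have huniv : (Finset.univ : Finset (Fin m)) = insert i (insert j s) := by
    rw [hs, Finset.insert_erase (Finset.mem_erase.mpr ⟨hij.symm, Finset.mem_univ j⟩),
      Finset.insert_erase (Finset.mem_univ i)]
  have key : ∀ e : Fin m → ZMod 3, cnt e c
      = (if e i = c then 1 else 0) + ((if e j = c then 1 else 0)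
        + ∑ l ∈ s, if e l = c then 1 else 0) := by
    intro e
    rw [cnt, Finset.card_filter, huniv, Finset.sum_insert his, Finset.sum_insert hjs]
  have hxi : xvec m i j i = 1 := by simp [xvec]
  have hxj : xvec m i j j = 2 := by simp [xvec, hij.symm]
  have hsum : ∑ l ∈ s, (if d l - xvec m i j l = c then (1:ℕ) else 0)
      = ∑ l ∈ s, if d l = c then (1:ℕ) else 0 := by
    refine Finset.sum_congr rfl fun l hl => ?_
    have hlj : l ≠ j := Finset.ne_of_mem_erase hl
    have hli : l ≠ i := Finset.ne_of_mem_erase (Finset.mem_of_mem_erase hl)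
    simp [xvec, hli, hlj]
  have h2 : d j - xvec m i j j = d j + 1 := by
    rw [hxj]; have : ∀ z : ZMod 3, z - 2 = z + 1 := by decide
    exact this _
  rw [key, key, hsum, hxi, h2]
  omega

private lemma cnt_modeq {m : ℕ} (d : Fin m → ZMod 3) (h : ∑ l, d l = 0) :
    cnt d 1 % 3 = cnt d 2 % 3 := by
  classical
  have split1 := Finset.sum_filter_add_sum_filter_not Finset.univ (fun l => d l = 1) d
  have split2 := Finset.sum_filter_add_sum_filter_not
    (Finset.univ.filter (fun l => ¬ d l = 1)) (fun l => d l = 2) d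
  have hA : ∑ l ∈ Finset.univ.filter (fun l => d l = 1), d l = (cnt d 1 : ZMod 3) := by
    rw [Finset.sum_congr rfl (fun l hl => (Finset.mem_filter.mp hl).2), Finset.sum_const,
      nsmul_eq_mul, mul_one]
    rfl
  have hBset : (Finset.univ.filter (fun l => ¬ d l = 1)).filter (fun l => d l = 2)
      = Finset.univ.filter (fun l => d l = 2) := by
    ext l
    simp only [Finset.mem_filter, Finset.mem_univ, true_and]
    constructor
    · rintro ⟨_, h2⟩; exact h2
    · intro h2
      refine ⟨fun h1 => ?_, h2⟩
      rw [h1] at h2; exact (by decide : (1 : ZMod 3) ≠ 2) h2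
  have hB : ∑ l ∈ (Finset.univ.filter (fun l => ¬ d l = 1)).filter (fun l => d l = 2), d l
      = (cnt d 2 : ZMod 3) * 2 := by
    rw [hBset, Finset.sum_congr rfl (fun l hl => (Finset.mem_filter.mp hl).2), Finset.sum_const,
      nsmul_eq_mul]
    rfl
  have hC : ∑ l ∈ (Finset.univ.filter (fun l => ¬ d l = 1)).filter (fun l => ¬ d l = 2), d l
      = 0 := by
    refine Finset.sum_eq_zero fun l hl => ?_
    simp only [Finset.mem_filter] at hl
    rcases zmod3_cases (d l) with h0 | h1 | h2
    · exact h0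
    · exact absurd h1 hl.1.2
    · exact absurd h2 hl.2
  have hz : (cnt d 1 : ZMod 3) + (cnt d 2 : ZMod 3) * 2 = 0 := by
    rw [← split2, hA, hB, hC, add_zero, h] at split1
    exact split1
  have h3 : (3 : ZMod 3) = 0 := by decide
  have hcast : ((cnt d 1 : ℕ) : ZMod 3) = ((cnt d 2 : ℕ) : ZMod 3) := by
    linear_combination hz - (cnt d 2 : ZMod 3) * h3
  exact (ZMod.natCast_eq_natCast_iff _ _ _).mp hcast

private lemma exists_walk {m : ℕ} : ∀ (N : ℕ) (u v : GammaVert m),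
    cnt (u.1 - v.1) 1 + cnt (u.1 - v.1) 2 ≤ N →
    ∃ w : (Gm m).Walk u v,
      3 * w.length ≤ 2 * cnt (u.1 - v.1) 1 + cnt (u.1 - v.1) 2
        + (cnt (u.1 - v.1) 2 - cnt (u.1 - v.1) 1) := by
  intro N
  induction N with
  | zero =>
    intro u v h
    have ha : cnt (u.1 - v.1) 1 = 0 := by omega
    have hb : cnt (u.1 - v.1) 2 = 0 := by omega
    have hd0 : u.1 - v.1 = 0 := by
      funext l
      rcases zmod3_cases ((u.1 - v.1) l) with h0 | h1 | h2
      · exact h0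
      · have : 0 < cnt (u.1 - v.1) 1 :=
          Finset.card_pos.mpr ⟨l, Finset.mem_filter.mpr ⟨Finset.mem_univ l, h1⟩⟩
        omega
      · have : 0 < cnt (u.1 - v.1) 2 :=
          Finset.card_pos.mpr ⟨l, Finset.mem_filter.mpr ⟨Finset.mem_univ l, h2⟩⟩
        omega
    have huv : u = v := Subtype.ext (sub_eq_zero.mp hd0)
    subst huv
    exact ⟨SimpleGraph.Walk.nil, by simp⟩
  | succ N ih =>
    intro u v h
    by_cases hd0 : u.1 - v.1 = 0
    · have huv : u = v := Subtype.ext (sub_eq_zero.mp hd0)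
      subst huv
      exact ⟨SimpleGraph.Walk.nil, by simp⟩
    set d := u.1 - v.1 with hdd
    have hsum0 : ∑ l, d l = 0 := by
      have : ∑ l, d l = ∑ l, u.1 l - ∑ l, v.1 l := by
        simp [hdd, Pi.sub_apply, Finset.sum_sub_distrib]
      rw [this, u.2, v.2, sub_zero]
    have hmod : cnt d 1 % 3 = cnt d 2 % 3 := cnt_modeq d hsum0
    have hpos : 1 ≤ cnt d 1 + cnt d 2 := by
      obtain ⟨l, hl⟩ := Function.ne_iff.mp hd0
      rcases zmod3_cases (d l) with h0 | h1 | h2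
      · exact absurd h0 hl
      · have : 0 < cnt d 1 :=
          Finset.card_pos.mpr ⟨l, Finset.mem_filter.mpr ⟨Finset.mem_univ l, h1⟩⟩
        omega
      · have : 0 < cnt d 2 :=
          Finset.card_pos.mpr ⟨l, Finset.mem_filter.mpr ⟨Finset.mem_univ l, h2⟩⟩
        omega
    by_cases ha1 : 1 ≤ cnt d 1
    · by_cases hb1 : 1 ≤ cnt d 2
      · -- step removing a 1 and a 2
        obtain ⟨i, hi⟩ := Finset.card_pos.mp ha1
        obtain ⟨j, hj⟩ := Finset.card_pos.mp hb1
        have hdi : d i = 1 := (Finset.mem_filter.mp hi).2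
        have hdj : d j = 2 := (Finset.mem_filter.mp hj).2
        have hij : i ≠ j := by
          intro hh; rw [hh, hdj] at hdi; exact (by decide : (2 : ZMod 3) ≠ 1) hdi
        obtain ⟨u', hadj, hu'⟩ := neighbor u i j hij
        have hd' : u'.1 - v.1 = fun l => d l - xvec m i j l := by
          funext l; simp [hu', hdd, Pi.sub_apply]; ring
        have e1 := count_step d i j hij 1
        have e2 := count_step d i j hij 2
        rw [hdi, hdj] at e1 e2
        rw [if_pos (rfl : (1:ZMod 3) = 1), if_neg (by decide : ¬ (2:ZMod 3) = 1),
          if_neg (by decide : ¬ (1:ZMod 3) - 1 = 1), if_neg (by decide : ¬ (2:ZMod 3) + 1 = 1)] at e1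
        rw [if_neg (by decide : ¬ (1:ZMod 3) = 2), if_pos (rfl : (2:ZMod 3) = 2),
          if_neg (by decide : ¬ (1:ZMod 3) - 1 = 2), if_neg (by decide : ¬ (2:ZMod 3) + 1 = 2)] at e2
        obtain ⟨w', hw'⟩ := ih u' v (by rw [hd']; omega)
        rw [hd'] at hw'
        exact ⟨SimpleGraph.Walk.cons hadj w', by rw [SimpleGraph.Walk.length_cons]; omega⟩
      · -- only ones: cnt d 2 = 0, cnt d 1 ≥ 3
        have ha3 : 3 ≤ cnt d 1 := by omega
        obtain ⟨i, hi, j, hj, hij⟩ := Finset.one_lt_card.mp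
          (show 1 < cnt d 1 by omega)
        have hdi : d i = 1 := (Finset.mem_filter.mp hi).2
        have hdj : d j = 1 := (Finset.mem_filter.mp hj).2
        obtain ⟨u', hadj, hu'⟩ := neighbor u i j hij
        have hd' : u'.1 - v.1 = fun l => d l - xvec m i j l := by
          funext l; simp [hu', hdd, Pi.sub_apply]; ring
        have e1 := count_step d i j hij 1
        have e2 := count_step d i j hij 2
        rw [hdi, hdj] at e1 e2
        rw [if_pos (rfl : (1:ZMod 3) = 1),
          if_neg (by decide : ¬ (1:ZMod 3) - 1 = 1), if_neg (by decide : ¬ (1:ZMod 3) + 1 = 1)] at e1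
        rw [if_neg (by decide : ¬ (1:ZMod 3) = 2),
          if_neg (by decide : ¬ (1:ZMod 3) - 1 = 2), if_pos (by decide : (1:ZMod 3) + 1 = 2)] at e2
        obtain ⟨w', hw'⟩ := ih u' v (by rw [hd']; omega)
        rw [hd'] at hw'
        exact ⟨SimpleGraph.Walk.cons hadj w', by rw [SimpleGraph.Walk.length_cons]; omega⟩
    · -- only twos: cnt d 1 = 0, cnt d 2 ≥ 3
      have hb3 : 3 ≤ cnt d 2 := by omega
      obtain ⟨i, hi, j, hj, hij⟩ := Finset.one_lt_card.mp
        (show 1 < cnt d 2 by omega)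
      have hdi : d i = 2 := (Finset.mem_filter.mp hi).2
      have hdj : d j = 2 := (Finset.mem_filter.mp hj).2
      obtain ⟨u', hadj, hu'⟩ := neighbor u i j hij
      have hd' : u'.1 - v.1 = fun l => d l - xvec m i j l := by
        funext l; simp [hu', hdd, Pi.sub_apply]; ring
      have e1 := count_step d i j hij 1
      have e2 := count_step d i j hij 2
      rw [hdi, hdj] at e1 e2
      rw [if_neg (by decide : ¬ (2:ZMod 3) = 1),
        if_pos (by decide : (2:ZMod 3) - 1 = 1), if_neg (by decide : ¬ (2:ZMod 3) + 1 = 1)] at e1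
      rw [if_pos (rfl : (2:ZMod 3) = 2),
        if_neg (by decide : ¬ (2:ZMod 3) - 1 = 2), if_neg (by decide : ¬ (2:ZMod 3) + 1 = 2)] at e2
      obtain ⟨w', hw'⟩ := ih u' v (by rw [hd']; omega)
      rw [hd'] at hw'
      exact ⟨SimpleGraph.Walk.cons hadj w', by rw [SimpleGraph.Walk.length_cons]; omega⟩

/-- Let `n ≥ 2` and `H_{3n} = G_{3n} □ K_3`. If `x ∈ Q_i` and `y ∈ Q_j` with `i ≠ j`
(i.e. the `G_{3n}`-components of `x` and `y` lie in distinct equivalence classes of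
`∼`, equivalently their difference is none of `0, (1,…,1), (2,…,2)`), then
`d_{H_{3n}}(x, y) ≤ 2n`. -/
theorem dist_boxProd_le (n : ℕ) (hn : 2 ≤ n)
    (x y : GammaVert (3 * n) × Fin 3)
    (h0 : x.1.1 - y.1.1 ≠ 0)
    (ha : x.1.1 - y.1.1 ≠ (fun _ => 1 : Fin (3 * n) → ZMod 3))
    (hb : x.1.1 - y.1.1 ≠ (fun _ => 2 : Fin (3 * n) → ZMod 3)) :
    ((Gm (3 * n)).boxProd (⊤ : SimpleGraph (Fin 3))).dist x y ≤ 2 * n := by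
  set d := x.1.1 - y.1.1 with hdd
  have hsum0 : ∑ l, d l = 0 := by
    have : ∑ l, d l = ∑ l, x.1.1 l - ∑ l, y.1.1 l := by
      simp [hdd, Pi.sub_apply, Finset.sum_sub_distrib]
    rw [this, x.1.2, y.1.2, sub_zero]
  have hmod : cnt d 1 % 3 = cnt d 2 % 3 := cnt_modeq d hsum0
  have hdisj : Disjoint (Finset.univ.filter fun l => d l = 1)
      (Finset.univ.filter fun l => d l = 2) := by
    rw [Finset.disjoint_left]
    intro l h1 h2
    have e1 : d l = 1 := (Finset.mem_filter.mp h1).2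
    have e2 : d l = 2 := (Finset.mem_filter.mp h2).2
    rw [e1] at e2
    exact (by decide : (1 : ZMod 3) ≠ 2) e2
  have hub : cnt d 1 + cnt d 2 ≤ 3 * n := by
    calc cnt d 1 + cnt d 2
        = ((Finset.univ.filter fun l => d l = 1) ∪ (Finset.univ.filter fun l => d l = 2)).card :=
          (Finset.card_union_of_disjoint hdisj).symm
      _ ≤ (Finset.univ : Finset (Fin (3 * n))).card := Finset.card_le_univ _
      _ = 3 * n := by simp
  have hA' : cnt d 1 ≠ 3 * n := by
    intro hcard
    apply ha
    have huniv : (Finset.univ.filter fun l => d l = 1) = Finset.univ :=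
      Finset.eq_univ_of_card _ (by rw [show (Finset.univ.filter fun l => d l = 1).card = cnt d 1 from rfl, hcard, Fintype.card_fin])
    funext l
    have hmem : l ∈ Finset.univ.filter fun l => d l = 1 := by
      rw [huniv]; exact Finset.mem_univ l
    exact (Finset.mem_filter.mp hmem).2
  have hB' : cnt d 2 ≠ 3 * n := by
    intro hcard
    apply hb
    have huniv : (Finset.univ.filter fun l => d l = 2) = Finset.univ :=
      Finset.eq_univ_of_card _ (by rw [show (Finset.univ.filter fun l => d l = 2).card = cnt d 2 from rfl, hcard, Fintype.card_fin])
    funext l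
    have hmem : l ∈ Finset.univ.filter fun l => d l = 2 := by
      rw [huniv]; exact Finset.mem_univ l
    exact (Finset.mem_filter.mp hmem).2
  obtain ⟨w, hw⟩ := exists_walk (cnt d 1 + cnt d 2) x.1 y.1 le_rfl
  have hlen : w.length ≤ 2 * n - 1 := by
    rw [← hdd] at hw
    omega
  have hlen' : w.length + 1 ≤ 2 * n := by omega
  set H3 : SimpleGraph (Fin 3) := (⊤ : SimpleGraph (Fin 3)) with hH3
  have hl1 : (SimpleGraph.Walk.boxProdLeft H3 x.2 w).length = w.length :=
    SimpleGraph.Walk.length_map _ _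
  by_cases h2 : x.2 = y.2
  · have hxy : ((y.1, x.2) : GammaVert (3 * n) × Fin 3) = y := by
      rw [h2]
    have := SimpleGraph.dist_le (SimpleGraph.Walk.boxProdLeft H3 x.2 w)
    rw [hl1] at this
    rw [← hxy]
    exact le_trans this (by omega)
  · have hadj : H3.Adj x.2 y.2 := by
      rw [hH3]; exact h2
    have hd := SimpleGraph.dist_le ((SimpleGraph.Walk.boxProdLeft H3 x.2 w).append
        (SimpleGraph.Walk.boxProdRight (Gm (3 * n)) y.1
          (SimpleGraph.Walk.cons hadj SimpleGraph.Walk.nil)))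
    refine le_trans hd ?_
    rw [SimpleGraph.Walk.length_append, hl1]
    have hr : (SimpleGraph.Walk.boxProdRight (Gm (3 * n)) y.1
        (SimpleGraph.Walk.cons hadj SimpleGraph.Walk.nil)).length = 1 := by
      simp [SimpleGraph.Walk.boxProdRight]; rfl
    rw [hr]
    exact hlen'
end
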